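/- arXiv:1511.05874 — 5 statements merged into one kernel-verified Lean document; each statement's English description precedes it below -/
import Mathlib

section
/- Generalized Hölder inequality: Let (X, 𝔐, λ) be a measure space, let 1 ≤ r ≤ ℓ, and let F_1, …, F_ℓ : X → ℂ be measurable. Then ∫_X ∏_{j=1}^ℓ |F_j| dλ ≤ ∏_{S ⊆ [ℓ], |S|=r} ( ∫_X ∏_{j∈S} |F_j|^{ℓ/r} dλ )^{1/C(ℓ,r)}, where the product is over all subsets S of [ℓ] of size r. -/
open MeasureTheory ENNReal

lemma count_powersetCard_mem {ℓ r : ℕ} (hr : 1 ≤ r) (j : Fin ℓ) :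
    (((Finset.univ : Finset (Fin ℓ)).powersetCard r).filter (fun S => j ∈ S)).card
      = (ℓ - 1).choose (r - 1) := by
  classical
  have : (((Finset.univ : Finset (Fin ℓ)).powersetCard r).filter (fun S => j ∈ S)).card
      = ((Finset.univ.erase j).powersetCard (r - 1)).card := by
    apply Finset.card_bij (fun S _ => S.erase j)
    · intro S hS
      simp only [Finset.mem_filter, Finset.mem_powersetCard] at hS
      obtain ⟨⟨hsub, hcard⟩, hj⟩ := hS
      rw [Finset.mem_powersetCard]
      exact ⟨Finset.erase_subset_erase _ hsub, by rw [Finset.card_erase_of_mem hj, hcard]⟩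
    · intro S hS T hT h
      simp only [Finset.mem_filter] at hS hT
      rw [← Finset.insert_erase hS.2, ← Finset.insert_erase hT.2, h]
    · intro T hT
      rw [Finset.mem_powersetCard] at hT
      refine ⟨insert j T, ?_, by simp [Finset.erase_insert_of_ne,
        Finset.erase_eq_of_notMem (fun h => (Finset.mem_erase.1 (hT.1 h)).1 rfl)]⟩
      simp only [Finset.mem_filter, Finset.mem_powersetCard]
      have hjT : j ∉ T := fun h => (Finset.mem_erase.1 (hT.1 h)).1 rfl
      refine ⟨⟨Finset.subset_univ _, ?_⟩, Finset.mem_insert_self _ _⟩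
      rw [Finset.card_insert_of_notMem hjT, hT.2, Nat.sub_add_cancel hr]
  rw [this, Finset.card_powersetCard, Finset.card_erase_of_mem (Finset.mem_univ j),
    Finset.card_univ, Fintype.card_fin]

/-- Generalized Hölder inequality: for a measure space `(X, λ)`, `1 ≤ r ≤ ℓ`, and measurable
`F_1, …, F_ℓ : X → ℂ`, we have
`∫ ∏ |F_j| dλ ≤ ∏_{S ⊆ [ℓ], |S| = r} (∫ ∏_{j ∈ S} |F_j|^(ℓ/r) dλ)^(1/C(ℓ,r))`. -/
theorem generalized_holder {X : Type*} [MeasurableSpace X] (lam : Measure X)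
    (ℓ r : ℕ) (hr : 1 ≤ r) (hrl : r ≤ ℓ)
    (F : Fin ℓ → X → ℂ) (hF : ∀ j, Measurable (F j)) :
    ∫⁻ x, ∏ j, ENNReal.ofReal ‖F j x‖ ∂lam ≤
      ∏ S ∈ (Finset.univ : Finset (Fin ℓ)).powersetCard r,
        (∫⁻ x, ∏ j ∈ S, ENNReal.ofReal ‖F j x‖ ^ ((ℓ : ℝ) / (r : ℝ)) ∂lam) ^
          (1 / (Nat.choose ℓ r : ℝ)) := by
  classical
  have hℓ : 1 ≤ ℓ := hr.trans hrl
  have hC : (0 : ℝ) < (ℓ.choose r : ℝ) := by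
    exact_mod_cast Nat.choose_pos hrl
  set Ps := (Finset.univ : Finset (Fin ℓ)).powersetCard r with hPs
  set g : Fin ℓ → X → ℝ≥0∞ := fun j x => ENNReal.ofReal ‖F j x‖ with hg
  set f : Finset (Fin ℓ) → X → ℝ≥0∞ :=
    fun S x => ∏ j ∈ S, g j x ^ ((ℓ : ℝ) / (r : ℝ)) with hf
  have key : ∀ x, ∏ j, g j x = ∏ S ∈ Ps, f S x ^ (1 / (ℓ.choose r : ℝ)) := by
    intro x
    have h1 : ∀ S ∈ Ps, f S x ^ (1 / (ℓ.choose r : ℝ))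
        = ∏ j ∈ S, g j x ^ ((ℓ : ℝ) / (r : ℝ) * (1 / (ℓ.choose r : ℝ))) := by
      intro S _
      rw [hf]
      rw [← ENNReal.prod_rpow_of_nonneg (by positivity)]
      exact Finset.prod_congr rfl fun j _ => by rw [← ENNReal.rpow_mul]
    rw [Finset.prod_congr rfl h1]
    rw [Finset.prod_comm' (s := Ps) (t := fun S => S) (t' := Finset.univ)
      (s' := fun j => Ps.filter (fun S => j ∈ S)) (by simp)]
    refine (Finset.prod_congr rfl fun j _ => ?_).symm
    rw [Finset.prod_const, count_powersetCard_mem hr j, ← ENNReal.rpow_natCast,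
      ← ENNReal.rpow_mul]
    have hnat : ℓ * (ℓ - 1).choose (r - 1) = ℓ.choose r * r := by
      have := Nat.add_one_mul_choose_eq (ℓ - 1) (r - 1)
      have e1 : ℓ - 1 + 1 = ℓ := by omega
      have e2 : r - 1 + 1 = r := by omega
      rwa [e1, e2] at this
    have hnum : (ℓ : ℝ) * ((ℓ - 1).choose (r - 1) : ℝ) = (r : ℝ) * (ℓ.choose r : ℝ) := by
      exact_mod_cast hnat.trans (Nat.mul_comm _ _)
    have hrpos : (0 : ℝ) < (r : ℝ) := by exact_mod_cast hr
    have hexp : (ℓ : ℝ) / (r : ℝ) * (1 / (ℓ.choose r : ℝ)) * ((ℓ - 1).choose (r - 1) : ℕ)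
        = 1 := by
      field_simp
      linarith [hnum]
    rw [hexp, ENNReal.rpow_one]
  have hrw : ∫⁻ x, ∏ j, ENNReal.ofReal ‖F j x‖ ∂lam
      = ∫⁻ x, ∏ S ∈ Ps, f S x ^ (1 / (ℓ.choose r : ℝ)) ∂lam := by
    exact lintegral_congr fun x => key x
  rw [hrw]
  have hmeas : ∀ S ∈ Ps, AEMeasurable (f S) lam := by
    intro S _
    exact (Finset.measurable_prod _ fun j _ =>
      ((measurable_ofReal.comp (hF j).norm).pow_const _)).aemeasurable
  have hsum : ∑ _S ∈ Ps, (1 / (ℓ.choose r : ℝ)) = 1 := by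
    rw [Finset.sum_const, hPs, Finset.card_powersetCard, Finset.card_univ, Fintype.card_fin,
      nsmul_eq_mul]
    field_simp
  exact ENNReal.lintegral_prod_norm_pow_le Ps hmeas hsum fun _ _ => by positivity
end

section
/- Smoothed Bohr cutoff properties: Let B = B(Γ, δ) be a Bohr set in 𝕋ⁿ with frequency set Γ of size d and radius δ ∈ (0, 1/2]. Define φ_B(x) = Δ((1/δ) sup_{ξ∈Γ} ‖ξ·x‖) where Δ(t) = max(1−|t|, 0), and ν_B = φ_B / ∫φ_B. Then (i) ‖ν_B‖_∞ ≲ (δ/4)^{−d}; (ii) for every ρ ∈ (0,1] and every t ∈ B(Γ, ρδ), ‖ν_B(·+t) − ν_B‖_∞ ≲ (δ/4)^{−d} ρ; (iii) for every ξ ∈ Γ, the Fourier coefficient ν̂_B(ξ) = 1 + O(δ). -/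
open MeasureTheory Real Set Filter

section aux

lemma exp_bound' (t : ℝ) : ‖Complex.exp (t * Complex.I) - 1‖ ≤ 2 * |t| := by
  rcases le_or_gt |t| 1 with h | h
  · have := Complex.norm_exp_sub_one_le (x := t * Complex.I) (by simpa using h)
    simpa using this
  · calc ‖Complex.exp (t * Complex.I) - 1‖ ≤ ‖Complex.exp (t * Complex.I)‖ + 1 :=
          (norm_sub_le _ _).trans (by norm_num)
    _ ≤ 2 * |t| := by
          rw [show ((t:ℂ) * Complex.I) = (t:ℝ) * Complex.I by norm_num]
          rw [Complex.norm_exp_ofReal_mul_I]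
          linarith

lemma toCircle_bound' (y : AddCircle (1:ℝ)) :
    ‖(AddCircle.toCircle y : ℂ) - 1‖ ≤ 4 * π * ‖y‖ := by
  obtain ⟨x, rfl⟩ := QuotientAddGroup.mk_surjective y
  have hxy : ((x - round x : ℝ) : AddCircle (1:ℝ)) = (x : AddCircle (1:ℝ)) := by
    have h0 : ((x - round x : ℝ) : AddCircle (1:ℝ)) - (x : AddCircle (1:ℝ)) = 0 := by
      rw [← QuotientAddGroup.mk_sub, AddCircle.coe_eq_zero_iff]
      exact ⟨-round x, by push_cast [zsmul_eq_mul]; ring⟩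
    linear_combination (norm := abel) h0
  set a := x - round x with ha
  have hnorm : |a| = ‖(x : AddCircle (1:ℝ))‖ := by
    rw [AddCircle.norm_eq]; simp [ha]
  rw [← hxy, AddCircle.toCircle_apply_mk, Circle.coe_exp]
  have h2 := exp_bound' (2 * π / 1 * a)
  rw [show ((2 * π / 1 * a : ℝ) : ℂ) = (2 * π / 1 * a : ℝ) by norm_num] at h2
  calc ‖Complex.exp ((2 * π / 1 * a : ℝ) * Complex.I) - 1‖ ≤ 2 * |2 * π / 1 * a| := h2
  _ = 4 * π * |a| := by
      rw [abs_mul, abs_of_nonneg (by positivity : (0:ℝ) ≤ 2 * π / 1)]; ring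
  _ = 4 * π * ‖((x:ℝ) : AddCircle (1:ℝ))‖ := by rw [hnorm]
  _ = 4 * π * ‖((a:ℝ) : AddCircle (1:ℝ))‖ := by rw [hxy]

/-- the canonical representative in `[0,1)` -/
noncomputable def rep : AddCircle (1:ℝ) → ℝ := fun y => (AddCircle.equivIco 1 0 y : ℝ)

lemma rep_measurable : Measurable rep :=
  measurable_subtype_coe.comp (AddCircle.measurableEquivIco (T := 1) 0).measurable

lemma rep_coe (y : AddCircle (1:ℝ)) : ((rep y : ℝ) : AddCircle (1:ℝ)) = y :=
  (AddCircle.equivIco 1 0).symm_apply_apply y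

lemma rep_mem (y : AddCircle (1:ℝ)) : rep y ∈ Set.Ico (0:ℝ) 1 := by
  simpa [rep] using (AddCircle.equivIco 1 0 y).2

lemma norm_coe_le' (a : ℝ) : ‖(a : AddCircle (1:ℝ))‖ ≤ |a| := by
  simpa using (QuotientAddGroup.norm_mk_le_norm (m := a) : ‖(a : AddCircle (1:ℝ))‖ ≤ ‖a‖)

/-- if two points have representatives in the same box of width `1/M`, they are close -/
lemma continuous_finset_sup_nnreal {α ι : Type*} [TopologicalSpace α] (s : Finset ι)
    (f : ι → α → NNReal) (hf : ∀ i, Continuous (f i)) :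
    Continuous fun x => s.sup fun i => f i x := by
  induction s using Finset.cons_induction with
  | empty => simpa using continuous_const
  | cons a s' ha ih =>
    simp only [Finset.sup_cons]
    exact (hf a).sup ih

lemma close_of_same_box {M : ℕ} (hM : 0 < M) (y₁ y₂ : AddCircle (1:ℝ))
    (h : ⌊(M:ℝ) * rep y₁⌋₊ = ⌊(M:ℝ) * rep y₂⌋₊) : ‖y₁ - y₂‖ ≤ (M:ℝ)⁻¹ := by
  have h1 := rep_mem y₁; have h2 := rep_mem y₂
  have hM0 : (0:ℝ) < M := by exact_mod_cast hM
  have ha : (0:ℝ) ≤ (M:ℝ) * rep y₁ := mul_nonneg hM0.le h1.1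
  have hb : (0:ℝ) ≤ (M:ℝ) * rep y₂ := mul_nonneg hM0.le h2.1
  have hfa1 : ((⌊(M:ℝ) * rep y₁⌋₊ : ℝ)) ≤ (M:ℝ) * rep y₁ := Nat.floor_le ha
  have hfa2 : (M:ℝ) * rep y₁ < (⌊(M:ℝ) * rep y₁⌋₊ : ℝ) + 1 := Nat.lt_floor_add_one _
  have hfb1 : ((⌊(M:ℝ) * rep y₂⌋₊ : ℝ)) ≤ (M:ℝ) * rep y₂ := Nat.floor_le hb
  have hfb2 : (M:ℝ) * rep y₂ < (⌊(M:ℝ) * rep y₂⌋₊ : ℝ) + 1 := Nat.lt_floor_add_one _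
  rw [h] at hfa1 hfa2
  have key : |(M:ℝ) * rep y₁ - (M:ℝ) * rep y₂| ≤ 1 := abs_le.mpr ⟨by linarith, by linarith⟩
  have hdiff : |rep y₁ - rep y₂| ≤ (M:ℝ)⁻¹ := by
    rw [inv_eq_one_div, le_div_iff₀ hM0]
    calc |rep y₁ - rep y₂| * M = |rep y₁ - rep y₂| * |(M:ℝ)| := by rw [abs_of_pos hM0]
    _ = |(rep y₁ - rep y₂) * M| := (abs_mul _ _).symm
    _ = |(M:ℝ) * rep y₁ - (M:ℝ) * rep y₂| := by ring_nf
    _ ≤ 1 := key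
  have hy : y₁ - y₂ = ((rep y₁ - rep y₂ : ℝ) : AddCircle (1:ℝ)) := by
    rw [QuotientAddGroup.mk_sub, rep_coe, rep_coe]
  rw [hy]
  exact (norm_coe_le' _).trans hdiff

end aux

open Filter


set_option maxHeartbeats 2000000 in
/-- Smoothed Bohr cutoff properties: for a Bohr set `B(Γ,δ)` in `𝕋ⁿ` with `|Γ| = d` and
`δ ∈ (0,1/2]`, setting `φ_B(x) = Δ(δ⁻¹ sup_{ξ∈Γ} ‖ξ·x‖)` with `Δ(t) = max(1−|t|,0)` and
`ν_B = φ_B / ∫ φ_B`, one has (i) `‖ν_B‖_∞ ≲ (δ/4)^{−d}`, (ii) for `ρ ∈ (0,1]` and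
`t ∈ B(Γ,ρδ)`, `‖ν_B(·+t) − ν_B‖_∞ ≲ (δ/4)^{−d} ρ`, and (iii) for `ξ ∈ Γ`,
`ν̂_B(ξ) = 1 + O(δ)`, with absolute implicit constants. -/
theorem smoothed_bohr_cutoff :
    ∃ C : ℝ, 0 < C ∧
    ∀ (n : ℕ) (Γ : Finset (Fin n → ℤ)) (δ : ℝ), 0 < δ → δ ≤ 1 / 2 →
    ∀ φ ν : (Fin n → AddCircle (1 : ℝ)) → ℝ,
      (∀ x, φ x = max (1 - δ⁻¹ * ((Γ.sup fun ξ => ‖∑ i, ξ i • x i‖₊ : NNReal) : ℝ)) 0) →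
      (∀ x, ν x = φ x / ∫ y, φ y) →
      ((∀ x, ν x ≤ C * ((δ / 4) ^ Γ.card)⁻¹) ∧
       (∀ ρ : ℝ, 0 < ρ → ρ ≤ 1 →
         ∀ t : Fin n → AddCircle (1 : ℝ), (∀ ξ ∈ Γ, ‖∑ i, ξ i • t i‖ ≤ ρ * δ) →
         ∀ x, |ν (x + t) - ν x| ≤ C * ((δ / 4) ^ Γ.card)⁻¹ * ρ) ∧
       (∀ ξ ∈ Γ,
         ‖(∫ x, (ν x : ℂ) * (AddCircle.toCircle (-(∑ i, ξ i • x i)) : ℂ)) - 1‖ ≤ C * δ)) := by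
  refine ⟨13, by norm_num, ?_⟩
  intro n Γ δ hδ0 hδ2 φ ν hφ hν
  set v : (Fin n → ℤ) → (Fin n → AddCircle (1:ℝ)) → AddCircle (1:ℝ) := fun ξ x => ∑ i, ξ i • x i with hv
  set s : (Fin n → AddCircle (1:ℝ)) → ℝ := fun x => ((Γ.sup fun ξ => ‖v ξ x‖₊ : NNReal) : ℝ) with hs
  have hδinv : (0:ℝ) < δ⁻¹ := inv_pos.mpr hδ0
  -- basic facts about v
  have hvcont : ∀ ξ, Continuous (v ξ) := by
    intro ξ
    exact continuous_finset_sum _ fun i _ => (continuous_apply i).zsmul (ξ i)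
  have hvadd : ∀ ξ (x t : Fin n → AddCircle (1:ℝ)), v ξ (x + t) = v ξ x + v ξ t := by
    intro ξ x t
    show (∑ i, ξ i • (x + t) i) = (∑ i, ξ i • x i) + ∑ i, ξ i • t i
    rw [← Finset.sum_add_distrib]
    refine Finset.sum_congr rfl fun i _ => ?_
    rw [Pi.add_apply, smul_add]
  -- basic facts about s
  have hs_nonneg : ∀ x, 0 ≤ s x := fun x => NNReal.coe_nonneg _
  have hle_s : ∀ x ξ, ξ ∈ Γ → ‖v ξ x‖ ≤ s x := by
    intro x ξ hξ
    have := Finset.le_sup (f := fun ξ => ‖v ξ x‖₊) hξ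
    exact_mod_cast this
  have hs_le : ∀ (x : Fin n → AddCircle (1:ℝ)) (c : ℝ), 0 ≤ c → (∀ ξ ∈ Γ, ‖v ξ x‖ ≤ c) → s x ≤ c := by
    intro x c hc h
    have h2 : Γ.sup (fun ξ => ‖v ξ x‖₊) ≤ c.toNNReal := by
      refine Finset.sup_le fun ξ hξ => ?_
      rw [← NNReal.coe_le_coe, coe_nnnorm, Real.coe_toNNReal c hc]
      exact h ξ hξ
    calc s x ≤ (c.toNNReal : ℝ) := by exact_mod_cast h2
    _ = c := Real.coe_toNNReal c hc
  have hscont : Continuous s :=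
    NNReal.continuous_coe.comp
      (continuous_finset_sup_nnreal Γ (fun ξ x => ‖v ξ x‖₊) fun ξ => (hvcont ξ).nnnorm)
  -- basic facts about φ
  have hφ_nonneg : ∀ x, 0 ≤ φ x := fun x => by rw [hφ]; exact le_max_right _ _
  have hφ_le_one : ∀ x, φ x ≤ 1 := by
    intro x
    rw [hφ]
    have : 0 ≤ δ⁻¹ * s x := mul_nonneg hδinv.le (hs_nonneg x)
    exact max_le (by linarith) (by norm_num)
  have hφeq : φ = fun x => max (1 - δ⁻¹ * s x) 0 := funext hφ
  have hφcont : Continuous φ := by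
    rw [hφeq]
    exact (continuous_const.sub (continuous_const.mul hscont)).max continuous_const
  have hφint : Integrable φ := by
    apply hφcont.integrable_of_hasCompactSupport
    exact IsCompact.of_isClosed_subset isCompact_univ (isClosed_tsupport φ) (subset_univ _)
  haveI : IsProbabilityMeasure (volume : Measure (Fin n → AddCircle (1:ℝ))) := by
    constructor
    rw [volume_pi, Measure.pi_univ]
    simp [AddCircle.measure_univ]
  have hpow_pos : (0:ℝ) < (δ/4) ^ Γ.card := by positivity
  -- the key lower bound for the integral of φ
  have key : (δ/4) ^ Γ.card / 2 ≤ ∫ y, φ y := by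
    set M : ℕ := ⌈2/δ⌉₊ with hM
    have hM1 : (2:ℝ)/δ ≤ M := Nat.le_ceil _
    have h2δ : (4:ℝ) ≤ 2/δ := by rw [le_div_iff₀ hδ0]; linarith
    have hMpos : 0 < M := Nat.ceil_pos.mpr (by positivity)
    have hM0 : (0:ℝ) < M := by exact_mod_cast hMpos
    have hMle : (M:ℝ) ≤ 4/δ := by
      have := Nat.ceil_lt_add_one (show (0:ℝ) ≤ 2/δ by positivity)
      have h4 : 2/δ + 1 ≤ 4/δ := by
        have : (1:ℝ) ≤ 2/δ := by linarith
        have e : (4:ℝ)/δ = 2/δ + 2/δ := by ring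
        linarith
      linarith
    have hMinv : (M:ℝ)⁻¹ ≤ δ/2 := by
      rw [inv_le_comm₀ hM0 (by positivity)]
      calc (δ/2)⁻¹ = 2/δ := by field_simp
      _ ≤ M := hM1
    set idx : AddCircle (1:ℝ) → ℕ := fun y => ⌊(M:ℝ) * rep y⌋₊ with hidx
    have hidxlt : ∀ y, idx y < M := by
      intro y
      rw [hidx, Nat.floor_lt (mul_nonneg hM0.le (rep_mem y).1)]
      calc (M:ℝ) * rep y < M * 1 := by
            exact mul_lt_mul_of_pos_left (rep_mem y).2 hM0
      _ = M := mul_one _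
    haveI : Nonempty (Fin M) := ⟨⟨0, hMpos⟩⟩
    set S : ((↥Γ) → Fin M) → Set (Fin n → AddCircle (1:ℝ)) := fun k => ⋂ ξ : ↥Γ, {x | idx (v ξ x) = (k ξ : ℕ)} with hS
    have hSmeas : ∀ k, MeasurableSet (S k) := by
      intro k
      refine MeasurableSet.iInter fun ξ => ?_
      have hm : Measurable fun x : Fin n → AddCircle (1:ℝ) => idx (v ξ x) :=
        Nat.measurable_floor.comp ((rep_measurable.comp (hvcont _).measurable).const_mul _)
      exact hm (measurableSet_singleton ((k ξ : ℕ)))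
    have hcover : ∀ x : Fin n → AddCircle (1:ℝ), ∃ k, x ∈ S k := by
      intro x
      exact ⟨fun ξ => ⟨idx (v ξ x), hidxlt _⟩, by simp [hS]⟩
    have hunion : (volume : Measure (Fin n → AddCircle (1:ℝ))) Set.univ ≤ ∑ k : (↥Γ) → Fin M, volume (S k) := by
      have hsub : Set.univ ⊆ ⋃ k ∈ (Finset.univ : Finset ((↥Γ) → Fin M)), S k := by
        intro x _
        obtain ⟨k, hk⟩ := hcover x
        exact Set.mem_biUnion (Finset.mem_univ k) hk
      exact (measure_mono hsub).trans (measure_biUnion_finset_le _ _)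
    have hsum : 1 ≤ ∑ k : (↥Γ) → Fin M, (volume (S k)).toReal := by
      have h1 : (volume : Measure (Fin n → AddCircle (1:ℝ))) Set.univ = 1 := measure_univ
      rw [h1] at hunion
      have hfin : ∀ k ∈ (Finset.univ : Finset ((↥Γ) → Fin M)), volume (S k) ≠ ⊤ :=
        fun k _ => measure_ne_top _ _
      calc (1:ℝ) = (1:ENNReal).toReal := by simp
      _ ≤ (∑ k : (↥Γ) → Fin M, volume (S k)).toReal :=
          ENNReal.toReal_mono (ENNReal.sum_ne_top.mpr hfin) hunion
      _ = ∑ k : (↥Γ) → Fin M, (volume (S k)).toReal := ENNReal.toReal_sum hfin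
    haveI : Nonempty ((↥Γ) → Fin M) := inferInstance
    obtain ⟨k₀, -, hk₀max⟩ := Finset.exists_max_image (Finset.univ : Finset ((↥Γ) → Fin M))
      (fun k => (volume (S k)).toReal) Finset.univ_nonempty
    have hNcard : (Fintype.card ((↥Γ) → Fin M) : ℝ) = (M:ℝ) ^ Γ.card := by
      rw [Fintype.card_fun, Fintype.card_coe, Fintype.card_fin]
      push_cast
      ring
    have hMd : (0:ℝ) < (M:ℝ) ^ Γ.card := by positivity
    have havg : (δ/4) ^ Γ.card ≤ (volume (S k₀)).toReal := by
      have h1 : (1:ℝ) ≤ (M:ℝ) ^ Γ.card * (volume (S k₀)).toReal := by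
        calc (1:ℝ) ≤ ∑ k : (↥Γ) → Fin M, (volume (S k)).toReal := hsum
        _ ≤ ∑ _k : (↥Γ) → Fin M, (volume (S k₀)).toReal :=
            Finset.sum_le_sum fun k _ => hk₀max k (Finset.mem_univ k)
        _ = (Fintype.card ((↥Γ) → Fin M) : ℝ) * (volume (S k₀)).toReal := by
            rw [Finset.sum_const, nsmul_eq_mul, Finset.card_univ]
        _ = (M:ℝ) ^ Γ.card * (volume (S k₀)).toReal := by rw [hNcard]
      have h2 : ((M:ℝ) ^ Γ.card)⁻¹ ≤ (volume (S k₀)).toReal := by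
        rw [inv_le_iff_one_le_mul₀ hMd]
        linarith [h1]
      refine le_trans ?_ h2
      have h3 : (δ/4) ^ Γ.card * (M:ℝ) ^ Γ.card ≤ 1 := by
        rw [← mul_pow]
        apply pow_le_one₀ (by positivity)
        calc δ/4 * M ≤ δ/4 * (4/δ) := by
              exact mul_le_mul_of_nonneg_left hMle (by positivity)
        _ = 1 := by field_simp
      rw [inv_eq_one_div, le_div_iff₀ hMd]
      linarith [h3]
    -- pick a point of the heavy box
    have hpos0 : volume (S k₀) ≠ 0 := by
      intro hzero
      rw [hzero] at havg
      simp at havg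
      nlinarith [hpow_pos, havg]
    obtain ⟨x₀, hx₀⟩ := nonempty_of_measure_ne_zero hpos0
    set A : Set (Fin n → AddCircle (1:ℝ)) := (fun z => z + x₀) ⁻¹' (S k₀) with hA
    have hAmeas : MeasurableSet A :=
      (measurable_id.add_const x₀) (hSmeas k₀)
    have hAvol : volume A = volume (S k₀) := by
      rw [hA]
      exact measure_preimage_add_right volume x₀ (S k₀)
    have hAphi : ∀ z ∈ A, (1/2 : ℝ) ≤ φ z := by
      intro z hz
      have hsz : s z ≤ δ/2 := by
        refine hs_le z (δ/2) (by positivity) fun ξ hξ => ?_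
        have hz' : z + x₀ ∈ S k₀ := hz
        have h1 : idx (v ξ (z + x₀)) = (k₀ ⟨ξ, hξ⟩ : ℕ) := by
          have := Set.mem_iInter.mp hz' ⟨ξ, hξ⟩
          exact this
        have h2 : idx (v ξ x₀) = (k₀ ⟨ξ, hξ⟩ : ℕ) := by
          have := Set.mem_iInter.mp hx₀ ⟨ξ, hξ⟩
          exact this
        have hveq : v ξ z = v ξ (z + x₀) - v ξ x₀ := by
          rw [hvadd ξ z x₀]; abel
        rw [hveq]
        refine (close_of_same_box hMpos _ _ (h1.trans h2.symm)).trans hMinv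
      rw [hφ]
      have : δ⁻¹ * s z ≤ δ⁻¹ * (δ/2) := mul_le_mul_of_nonneg_left hsz hδinv.le
      have hhalf : δ⁻¹ * (δ/2) = 1/2 := by field_simp
      refine le_trans ?_ (le_max_left _ _)
      linarith
    calc (δ/4) ^ Γ.card / 2 ≤ (volume A).toReal * (1/2) := by
          rw [hAvol]; nlinarith [havg]
    _ = ∫ _z in A, (1/2 : ℝ) := by
          rw [setIntegral_const, smul_eq_mul]; rfl
    _ ≤ ∫ z in A, φ z := by
          refine setIntegral_mono_on (integrableOn_const ?_) hφint.integrableOn hAmeas hAphi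
          exact (measure_lt_top _ _).ne
    _ ≤ ∫ z, φ z := setIntegral_le_integral hφint (Eventually.of_forall hφ_nonneg)
  have hIpos : (0:ℝ) < ∫ y, φ y := lt_of_lt_of_le (by positivity) key
  set I : ℝ := ∫ y, φ y with hI
  have hinv_le : I⁻¹ ≤ 2 * ((δ/4) ^ Γ.card)⁻¹ := by
    have h2 : (δ/4) ^ Γ.card / 2 ≤ I := key
    calc I⁻¹ ≤ ((δ/4) ^ Γ.card / 2)⁻¹ := by
          exact inv_anti₀ (by positivity) h2
    _ = 2 * ((δ/4) ^ Γ.card)⁻¹ := by field_simp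
  have hpowinv_pos : (0:ℝ) < ((δ/4) ^ Γ.card)⁻¹ := by positivity
  refine ⟨?_, ?_, ?_⟩
  · -- part (i)
    intro x
    rw [hν]
    calc φ x / I ≤ 1 / I := by gcongr; exact hφ_le_one x
    _ = I⁻¹ := one_div I
    _ ≤ 2 * ((δ/4) ^ Γ.card)⁻¹ := hinv_le
    _ ≤ 13 * ((δ/4) ^ Γ.card)⁻¹ := by nlinarith [hpowinv_pos]
  · -- part (ii)
    intro ρ hρ0 hρ1 t ht x
    have hρδ : (0:ℝ) ≤ ρ * δ := by positivity
    have h1 : s (x + t) ≤ s x + ρ * δ := by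
      refine hs_le _ _ (add_nonneg (hs_nonneg x) hρδ) fun ξ hξ => ?_
      calc ‖v ξ (x + t)‖ = ‖v ξ x + v ξ t‖ := by rw [hvadd]
      _ ≤ ‖v ξ x‖ + ‖v ξ t‖ := norm_add_le _ _
      _ ≤ s x + ρ * δ := add_le_add (hle_s x ξ hξ) (ht ξ hξ)
    have h2 : s x ≤ s (x + t) + ρ * δ := by
      refine hs_le _ _ (add_nonneg (hs_nonneg _) hρδ) fun ξ hξ => ?_
      have hrw : v ξ x = v ξ (x + t) + -(v ξ t) := by rw [hvadd ξ x t]; abel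
      calc ‖v ξ x‖ = ‖v ξ (x + t) + -(v ξ t)‖ := by rw [← hrw]
      _ ≤ ‖v ξ (x + t)‖ + ‖-(v ξ t)‖ := norm_add_le _ _
      _ = ‖v ξ (x + t)‖ + ‖v ξ t‖ := by rw [norm_neg]
      _ ≤ s (x + t) + ρ * δ := add_le_add (hle_s _ ξ hξ) (ht ξ hξ)
    have hsdiff : |s (x + t) - s x| ≤ ρ * δ := abs_sub_le_iff.mpr ⟨by linarith, by linarith⟩
    have hφdiff : |φ (x + t) - φ x| ≤ ρ := by
      rw [hφ, hφ]
      refine le_trans (abs_max_sub_max_le_abs _ _ 0) ?_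
      have heq : (1 - δ⁻¹ * s (x + t)) - (1 - δ⁻¹ * s x) = δ⁻¹ * (s x - s (x + t)) := by ring
      rw [heq, abs_mul, abs_of_pos hδinv, abs_sub_comm]
      calc δ⁻¹ * |s (x + t) - s x| ≤ δ⁻¹ * (ρ * δ) := by
            exact mul_le_mul_of_nonneg_left hsdiff hδinv.le
      _ = ρ := by field_simp
    rw [hν, hν, div_sub_div_same, abs_div, abs_of_pos hIpos]
    calc |φ (x + t) - φ x| / I ≤ ρ / I := by gcongr
    _ = ρ * I⁻¹ := by rw [div_eq_mul_inv]
    _ ≤ ρ * (2 * ((δ/4) ^ Γ.card)⁻¹) := by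
        exact mul_le_mul_of_nonneg_left hinv_le hρ0.le
    _ ≤ 13 * ((δ/4) ^ Γ.card)⁻¹ * ρ := by nlinarith [hpowinv_pos, hρ0.le]
  · -- part (iii)
    intro ξ hξ
    set χ : (Fin n → AddCircle (1:ℝ)) → ℂ := fun x => (AddCircle.toCircle (-(v ξ x)) : ℂ) with hχ
    have hχcont : Continuous χ := by
      exact continuous_induced_dom.comp (AddCircle.continuous_toCircle.comp (hvcont ξ).neg)
    have hνeq : ν = fun x => φ x / I := funext hν
    have hνcont : Continuous ν := by rw [hνeq]; exact hφcont.div_const I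
    have hν_nonneg : ∀ x, 0 ≤ ν x := fun x => by
      rw [hν]; exact div_nonneg (hφ_nonneg x) hIpos.le
    have hνint1 : ∫ x, ν x = 1 := by
      rw [hνeq, integral_div, ← hI, div_self hIpos.ne']
    have compint : ∀ g : (Fin n → AddCircle (1:ℝ)) → ℂ, Continuous g → Integrable g := by
      intro g hg
      apply hg.integrable_of_hasCompactSupport
      exact IsCompact.of_isClosed_subset isCompact_univ (isClosed_tsupport g) (subset_univ _)
    have hint1 : Integrable fun x => (ν x : ℂ) * χ x :=
      compint _ ((Complex.continuous_ofReal.comp hνcont).mul hχcont)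
    have hint2 : Integrable fun x => (ν x : ℂ) :=
      compint _ (Complex.continuous_ofReal.comp hνcont)
    have hint3 : Integrable fun x => (ν x : ℂ) * (χ x - 1) :=
      compint _ ((Complex.continuous_ofReal.comp hνcont).mul (hχcont.sub continuous_const))
    have hνint' : Integrable ν := by rw [hνeq]; exact hφint.div_const I
    have e1 : (∫ x, (ν x : ℂ)) = 1 := by
      have h := ContinuousLinearMap.integral_comp_comm Complex.ofRealCLM hνint'
      calc (∫ x, (ν x : ℂ)) = ∫ x, Complex.ofRealCLM (ν x) := rfl
      _ = Complex.ofRealCLM (∫ x, ν x) := h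
      _ = 1 := by rw [hνint1]; simp
    have e2 : ∫ x, (ν x : ℂ) * (χ x - 1) = (∫ x, (ν x : ℂ) * χ x) - ∫ x, (ν x : ℂ) := by
      rw [← integral_sub hint1 hint2]
      congr 1
      funext x
      ring
    rw [show (∫ x, (ν x : ℂ) * χ x) - 1 = ∫ x, (ν x : ℂ) * (χ x - 1) by rw [e2, e1]]
    have hptwise : ∀ x, ‖(ν x : ℂ) * (χ x - 1)‖ ≤ (4 * π * δ) * ν x := by
      intro x
      rw [norm_mul, Complex.norm_real, Real.norm_eq_abs, abs_of_nonneg (hν_nonneg x)]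
      rcases eq_or_lt_of_le (hφ_nonneg x) with h0 | hpos
      · have : ν x = 0 := by rw [hν, ← h0, zero_div]
        rw [this]
        simp
      · have hsx : s x ≤ δ := by
          have hmax : 0 < max (1 - δ⁻¹ * s x) 0 := by rw [← hφ]; exact hpos
          have h1 : 0 < 1 - δ⁻¹ * s x := by
            rcases lt_max_iff.mp hmax with h | h
            · exact h
            · exact absurd h (lt_irrefl 0)
          have h2 : δ⁻¹ * s x < 1 := by linarith
          have h3 := mul_lt_mul_of_pos_left h2 hδ0
          rw [mul_one] at h3
          calc s x = δ * (δ⁻¹ * s x) := by field_simp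
          _ ≤ δ := h3.le
        have hb : ‖χ x - 1‖ ≤ 4 * π * δ := by
          refine (toCircle_bound' _).trans ?_
          rw [norm_neg]
          have := (hle_s x ξ hξ).trans hsx
          nlinarith [pi_pos]
        calc ν x * ‖χ x - 1‖ ≤ ν x * (4 * π * δ) :=
              mul_le_mul_of_nonneg_left hb (hν_nonneg x)
        _ = (4 * π * δ) * ν x := by ring
    calc ‖∫ x, (ν x : ℂ) * (χ x - 1)‖ ≤ ∫ x, ‖(ν x : ℂ) * (χ x - 1)‖ :=
          norm_integral_le_integral_norm _
    _ ≤ ∫ x, (4 * π * δ) * ν x := by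
          refine integral_mono hint3.norm ?_ hptwise
          exact (continuous_const.mul hνcont).integrable_of_hasCompactSupport
            (IsCompact.of_isClosed_subset isCompact_univ (isClosed_tsupport _) (subset_univ _))
    _ = (4 * π * δ) * ∫ x, ν x := integral_const_mul _ _
    _ = 4 * π * δ := by rw [hνint1, mul_one]
    _ ≤ 13 * δ := by nlinarith [pi_lt_d2, hδ0]
end

section
/- Periodization Fourier bound: Let f : ℝⁿ → ℂ be a bounded measurable function supported in [−1/4, 1/4]ⁿ whose Fourier coefficients f̂(k) = ∫ f(x) e(−k·x) dx for k ∈ ℤⁿ satisfy sup_{k ∈ ℤⁿ} |f̂(k)| ≤ M. Then sup_{ξ ∈ ℝⁿ} |f̂(ξ)| ≤ C_n M for a constant C_n depending only on n, where f̂(ξ) = ∫_{ℝⁿ} f(x) e(−ξ·x) dx. -/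
open MeasureTheory Real FourierTransform

noncomputable section PFB

/-- Package a smooth compactly supported function as a Schwartz map. -/
def pfbMkSchwartz (f : ℝ → ℂ) (h1 : ContDiff ℝ ((⊤ : ℕ∞) : WithTop ℕ∞) f)
    (h2 : HasCompactSupport f) : SchwartzMap ℝ ℂ where
  toFun := f
  smooth' := h1
  decay' := by
    intro k m
    have hc : Continuous fun x : ℝ => ‖x‖ ^ k * ‖iteratedFDeriv ℝ m f x‖ :=
      ((continuous_norm.pow k).mul ((h1.continuous_iteratedFDeriv (by exact_mod_cast le_top)).norm))
    have hs : HasCompactSupport fun x : ℝ => ‖x‖ ^ k * ‖iteratedFDeriv ℝ m f x‖ :=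
      ((h2.iteratedFDeriv m).norm).mul_left
    obtain ⟨C, hC⟩ := hc.bounded_above_of_compact_support hs
    exact ⟨C, fun x => le_trans (le_abs_self _) (hC x)⟩

def pfbBump : ContDiffBump (0 : ℝ) :=
  ⟨1/4, 1/2, by norm_num, by norm_num⟩

def pfbChi : ℝ → ℂ := fun y => ((pfbBump y : ℝ) : ℂ)

lemma pfbChi_contDiff : ContDiff ℝ ((⊤ : ℕ∞) : WithTop ℕ∞) pfbChi :=
  Complex.ofRealCLM.contDiff.comp pfbBump.contDiff

lemma pfbChi_compact : HasCompactSupport pfbChi :=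
  pfbBump.hasCompactSupport.comp_left (g := fun r : ℝ => (r : ℂ)) (by simp)

lemma pfbChi_one {x : ℝ} (hx : |x| ≤ 1/4) : pfbChi x = 1 := by
  have : x ∈ Metric.closedBall (0:ℝ) pfbBump.rIn := by
    simp only [Metric.mem_closedBall, Real.dist_eq, sub_zero]
    simpa [pfbBump] using hx
  simp [pfbChi, pfbBump.one_of_mem_closedBall this]

lemma pfbChi_zero {x : ℝ} (hx : (1:ℝ)/2 ≤ |x|) : pfbChi x = 0 := by
  have : pfbBump.rOut ≤ dist x 0 := by
    simpa [Real.dist_eq, pfbBump] using hx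
  simp [pfbChi, pfbBump.zero_of_le_dist this]

def pfbChiS : SchwartzMap ℝ ℂ := pfbMkSchwartz pfbChi pfbChi_contDiff pfbChi_compact

/-- The modulated cutoff. -/
def pfbG (ξ : ℝ) : ℝ → ℂ := fun y => pfbChi y * Complex.exp (-(2 * (π:ℂ) * Complex.I) * ξ * y)

lemma pfbG_contDiff (ξ : ℝ) : ContDiff ℝ ((⊤ : ℕ∞) : WithTop ℕ∞) (pfbG ξ) := by
  apply pfbChi_contDiff.mul
  apply Complex.contDiff_exp.comp
  exact contDiff_const.mul Complex.ofRealCLM.contDiff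

lemma pfbG_compact (ξ : ℝ) : HasCompactSupport (pfbG ξ) :=
  pfbChi_compact.mul_right

def pfbGS (ξ : ℝ) : SchwartzMap ℝ ℂ := pfbMkSchwartz (pfbG ξ) (pfbG_contDiff ξ) (pfbG_compact ξ)

lemma pfbGS_apply (ξ x : ℝ) : pfbGS ξ x = pfbG ξ x := rfl

lemma pfbG_fourier (ξ η : ℝ) : 𝓕 (pfbG ξ) η = 𝓕 pfbChi (ξ + η) := by
  rw [Real.fourier_eq', Real.fourier_eq']
  congr 1
  ext y
  simp only [RCLike.inner_apply, conj_trivial, smul_eq_mul, pfbG]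
  rw [show Complex.exp (((-2 * π * (η * y) : ℝ) : ℂ) * Complex.I) *
      (pfbChi y * Complex.exp (-(2 * (π:ℂ) * Complex.I) * ξ * y)) =
      pfbChi y * (Complex.exp (((-2 * π * (η * y) : ℝ) : ℂ) * Complex.I) *
        Complex.exp (-(2 * (π:ℂ) * Complex.I) * ξ * y)) from by ring,
    ← Complex.exp_add, mul_comm]
  congr 1
  push_cast
  ring

lemma pfbChi_hat_decay : ∃ A : ℝ, 0 < A ∧ ∀ u : ℝ, ‖𝓕 pfbChi u‖ ≤ A / (1 + u ^ 2) := by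
  set F := SchwartzMap.fourierTransformCLM ℝ pfbChiS with hF
  obtain ⟨C0, hC0pos, hC0⟩ := F.decay 0 0
  obtain ⟨C2, hC2pos, hC2⟩ := F.decay 2 0
  refine ⟨C0 + C2, by positivity, fun u => ?_⟩
  have h0 := hC0 u
  have h2 := hC2 u
  rw [norm_iteratedFDeriv_zero] at h0 h2
  simp only [pow_zero, one_mul] at h0
  have hFu : F u = 𝓕 pfbChi u := by
    rw [hF, SchwartzMap.fourierTransformCLM_apply]; rfl
  rw [hFu] at h0 h2
  have hpos : (0:ℝ) < 1 + u ^ 2 := by positivity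
  rw [le_div_iff₀ hpos]
  have : ‖u‖ ^ 2 = u ^ 2 := by rw [Real.norm_eq_abs, _root_.sq_abs]
  nlinarith [norm_nonneg (𝓕 pfbChi u)]

lemma pfb_shift_sum : ∃ B : ℝ, 0 < B ∧ ∀ t : ℝ,
    (Summable fun k : ℤ => 1 / (1 + (t + k) ^ 2)) ∧
    (∑' k : ℤ, 1 / (1 + (t + k) ^ 2)) ≤ B := by
  set b : ℤ → ℝ := fun j => 4 / (j:ℝ) ^ 2 + if j = 0 then 1 else 0 with hb
  have hb_nonneg : ∀ j, 0 ≤ b j := by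
    intro j; dsimp [b]; positivity
  have hb_summ : Summable b := by
    apply Summable.add
    · have h2 : Summable fun n : ℤ => 1 / (n:ℝ) ^ 2 :=
        summable_one_div_int_pow.mpr one_lt_two
      simpa [div_eq_mul_inv, mul_comm] using h2.mul_left 4
    · exact (hasSum_ite_eq (0:ℤ) (1:ℝ)).summable
  have hkey : ∀ θ : ℝ, |θ| ≤ 1/2 → ∀ j : ℤ, 1 / (1 + (θ + j) ^ 2) ≤ b j := by
    intro θ hθ j
    have hθ1 : θ ≤ 1/2 := le_trans (le_abs_self θ) hθ
    have hθ2 : -(1/2) ≤ θ := neg_le_of_abs_le hθ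
    rcases eq_or_ne j 0 with h | h
    · subst h
      have h0 : (0:ℝ) < 1 + (θ + ((0:ℤ):ℝ)) ^ 2 := by positivity
      have h1 : 1 / (1 + (θ + ((0:ℤ):ℝ)) ^ 2) ≤ 1 := by
        rw [div_le_one h0]; nlinarith [sq_nonneg (θ + ((0:ℤ):ℝ))]
      have hb0 : b 0 = 1 := by norm_num [b]
      rw [hb0]; exact h1
    · have hj1 : (1:ℤ) ≤ j ^ 2 := by
        rcases lt_or_gt_of_ne h with h' | h' <;> nlinarith
      have hj1' : (1:ℝ) ≤ (j:ℝ) ^ 2 := by exact_mod_cast hj1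
      simp only [b, if_neg h, add_zero]
      rw [div_le_div_iff₀ (by positivity) (by positivity)]
      nlinarith [sq_nonneg (2*θ + (j:ℝ)), mul_nonneg (by linarith : (0:ℝ) ≤ 1/2 - θ)
        (by linarith : (0:ℝ) ≤ 1/2 + θ)]
  refine ⟨∑' j, b j, ?_, fun t => ?_⟩
  · exact Summable.tsum_pos hb_summ hb_nonneg 0 (by norm_num [b])
  set m : ℤ := round t with hm
  set θ : ℝ := t - m with hθdef
  have hθ : |θ| ≤ 1/2 := by simpa [hθdef] using abs_sub_round t
  have hrw : ∀ k : ℤ, 1 / (1 + (t + k) ^ 2) = 1 / (1 + (θ + ((k + m : ℤ) : ℝ)) ^ 2) := by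
    intro k; congr 2; push_cast [hθdef]; ring
  have hbe : Summable (b ∘ (Equiv.addRight m)) := (Equiv.addRight m).summable_iff.mpr hb_summ
  have hle : ∀ k : ℤ, 1 / (1 + (t + k) ^ 2) ≤ (b ∘ (Equiv.addRight m)) k := by
    intro k
    rw [hrw k]
    exact hkey θ hθ (k + m)
  have hsum : Summable fun k : ℤ => 1 / (1 + (t + k) ^ 2) :=
    hbe.of_nonneg_of_le (fun k => by positivity) hle
  refine ⟨hsum, ?_⟩
  calc (∑' k : ℤ, 1 / (1 + (t + k) ^ 2)) ≤ ∑' k, (b ∘ (Equiv.addRight m)) k :=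
        Summable.tsum_le_tsum hle hsum hbe
    _ = ∑' j, b j := (Equiv.addRight m).tsum_eq b

lemma pfb_norm_exp_I_mul (r : ℝ) : ‖Complex.exp ((r : ℂ) * Complex.I)‖ = 1 := by
  simp [Complex.norm_exp_ofReal_mul_I r]

end PFB

lemma pfb_key1d : ∃ S : ℝ, 0 < S ∧ ∀ ξ : ℝ,
    (Summable fun k : ℤ => ‖𝓕 pfbChi (ξ + k)‖) ∧
    (∑' k : ℤ, ‖𝓕 pfbChi (ξ + k)‖) ≤ S ∧
    ∀ x : ℝ, |x| ≤ 1/4 →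
      HasSum (fun k : ℤ => 𝓕 pfbChi (ξ + k) * Complex.exp ((2 * π * k * x : ℝ) * Complex.I))
        (Complex.exp (-(2 * (π:ℂ) * Complex.I) * ξ * x)) := by
  obtain ⟨A, hApos, hA⟩ := pfbChi_hat_decay
  obtain ⟨B, hBpos, hB⟩ := pfb_shift_sum
  refine ⟨A * B, by positivity, fun ξ => ?_⟩
  have hSummNorm : Summable fun k : ℤ => ‖𝓕 pfbChi (ξ + k)‖ :=
    Summable.of_nonneg_of_le (fun k => norm_nonneg _) (fun k => hA (ξ + k))
      (((hB ξ).1.mul_left A).congr (fun k => mul_one_div A _))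
  have hSumLe : (∑' k : ℤ, ‖𝓕 pfbChi (ξ + k)‖) ≤ A * B := by
    calc (∑' k : ℤ, ‖𝓕 pfbChi (ξ + k)‖) ≤ ∑' k : ℤ, A * (1 / (1 + (ξ + k) ^ 2)) := by
          apply Summable.tsum_le_tsum _ hSummNorm ((hB ξ).1.mul_left A)
          intro k
          rw [mul_one_div]
          exact hA (ξ + k)
      _ = A * ∑' k : ℤ, 1 / (1 + (ξ + k) ^ 2) := by rw [tsum_mul_left]
      _ ≤ A * B := by
          exact mul_le_mul_of_nonneg_left (hB ξ).2 hApos.le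
  refine ⟨hSummNorm, hSumLe, fun x hx => ?_⟩
  -- Poisson summation for the Schwartz function pfbGS ξ
  have hpoisson := SchwartzMap.tsum_eq_tsum_fourier (pfbGS ξ) x
  -- LHS is a single term
  have hL : (∑' m : ℤ, pfbGS ξ (x + m)) = Complex.exp (-(2 * (π:ℂ) * Complex.I) * ξ * x) := by
    rw [tsum_eq_single (0 : ℤ)]
    · show pfbG ξ (x + (0:ℤ)) = _
      simp only [Int.cast_zero, add_zero, pfbG]
      rw [pfbChi_one hx, one_mul]
    · intro m hm
      show pfbG ξ (x + m) = 0
      have h1 : (1:ℝ) ≤ |(m:ℝ)| := by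
        have := Int.one_le_abs hm
        calc (1:ℝ) ≤ ((|m| : ℤ) : ℝ) := by exact_mod_cast this
          _ = |(m:ℝ)| := by push_cast; rfl
      have h2 : (1:ℝ)/2 ≤ |x + m| := by
        have := abs_sub_abs_le_abs_sub (m : ℝ) (-x)
        rw [sub_neg_eq_add] at this
        have hxm : |x + (m:ℝ)| = |(m:ℝ) + x| := by rw [add_comm]
        rw [hxm]
        simp only [abs_neg] at this
        linarith [abs_nonneg x, hx, h1, this]
      simp [pfbG, pfbChi_zero h2]
  rw [hL] at hpoisson
  -- RHS rewriting
  have hR : ∀ k : ℤ, SchwartzMap.fourierTransformCLM ℝ (pfbGS ξ) k * fourier k (x : UnitAddCircle)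
      = 𝓕 pfbChi (ξ + k) * Complex.exp ((2 * π * k * x : ℝ) * Complex.I) := by
    intro k
    rw [SchwartzMap.fourierTransformCLM_apply]
    have h1 : 𝓕 (pfbGS ξ) k = 𝓕 pfbChi (ξ + k) := by
      have : ⇑(pfbGS ξ) = pfbG ξ := rfl
      rw [SchwartzMap.fourier_coe, this, pfbG_fourier]
    rw [h1, fourier_coe_apply]
    congr 1
    push_cast
    ring_nf
  have hSumm : Summable fun k : ℤ =>
      𝓕 pfbChi (ξ + k) * Complex.exp ((2 * π * k * x : ℝ) * Complex.I) := by
    apply Summable.of_norm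
    apply hSummNorm.congr
    intro k
    rw [norm_mul, pfb_norm_exp_I_mul, mul_one]
  have hhs := hSumm.hasSum
  have htsum : (∑' k : ℤ, 𝓕 pfbChi (ξ + k) * Complex.exp ((2 * π * k * x : ℝ) * Complex.I))
      = Complex.exp (-(2 * (π:ℂ) * Complex.I) * ξ * x) := by
    rw [hpoisson]
    exact tsum_congr fun k => (hR k).symm
  rwa [htsum] at hhs

lemma pfb_pi_tsum {𝕜 : Type*} [NormedField 𝕜] [CompleteSpace 𝕜] :
    ∀ {n : ℕ} (F : Fin n → ℤ → 𝕜), (∀ i, Summable fun k => ‖F i k‖) →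
      Summable (fun K : Fin n → ℤ => ‖∏ i, F i (K i)‖) ∧
      (∑' K : Fin n → ℤ, ∏ i, F i (K i)) = ∏ i, ∑' k, F i k := by
  intro n
  induction n with
  | zero =>
    intro F _
    constructor
    · exact Summable.of_finite
    · rw [tsum_eq_single (default : Fin 0 → ℤ)
        (fun b hb => (hb (Subsingleton.elim b default)).elim)]
      simp
  | succ n ih =>
    intro F hF
    obtain ⟨ihS, ihT⟩ := ih (fun i => F i.succ) (fun i => hF i.succ)
    set e := Fin.consEquiv (fun _ : Fin (n+1) => ℤ) with he
    set G : (Fin n → ℤ) → 𝕜 := fun K => ∏ i, F i.succ (K i) with hG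
    set f0 : ℤ → 𝕜 := F 0 with hf0
    have hcons : ∀ p : ℤ × (Fin n → ℤ), (∏ i, F i (e p i)) = f0 p.1 * G p.2 := by
      intro p
      rw [Fin.prod_univ_succ]
      congr 1
    have hsn : Summable fun K => ‖G K‖ := ihS
    set nf0 : ℤ → ℝ := fun a => ‖f0 a‖ with hnf0
    set nG : (Fin n → ℤ) → ℝ := fun K => ‖G K‖ with hnG
    have hnf0s : Summable nf0 := hF 0
    have hprod_summ : Summable (fun p : ℤ × (Fin n → ℤ) => nf0 p.1 * nG p.2) :=
      Summable.mul_of_nonneg hnf0s hsn (fun _ => norm_nonneg _) (fun _ => norm_nonneg _)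
    have hs : Summable (fun K : Fin (n+1) → ℤ => ‖∏ i, F i (K i)‖) := by
      rw [← e.summable_iff]
      apply hprod_summ.congr
      intro p
      show nf0 p.1 * nG p.2 = ‖∏ i, F i (e p i)‖
      rw [hcons p, norm_mul, hnf0, hnG]
    refine ⟨hs, ?_⟩
    rw [← e.tsum_eq]
    have hmul : (∑' a : ℤ, f0 a) * (∑' b : Fin n → ℤ, G b)
        = ∑' p : ℤ × (Fin n → ℤ), f0 p.1 * G p.2 :=
      tsum_mul_tsum_of_summable_norm (hF 0) hsn
    calc (∑' p : ℤ × (Fin n → ℤ), ∏ i, F i (e p i))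
        = ∑' p : ℤ × (Fin n → ℤ), f0 p.1 * G p.2 := tsum_congr hcons
      _ = (∑' a : ℤ, f0 a) * ∑' b : Fin n → ℤ, G b := hmul.symm
      _ = ∏ i : Fin (n+1), ∑' k, F i k := by
          rw [hG] at ihT ⊢
          rw [ihT]
          exact (Fin.prod_univ_succ (f := fun i : Fin (n+1) => ∑' k, F i k)).symm

open FourierTransform in
/-- Periodization Fourier bound: there is a constant `C_n` depending only on `n` such that,
for every bounded measurable `f : ℝⁿ → ℂ` supported in `[−1/4,1/4]ⁿ` whose Fourier
coefficients at integer frequencies are bounded by `M`, the Fourier transform of `f` is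
bounded by `C_n M` at every real frequency. -/
theorem periodization_fourier_bound (n : ℕ) (hn : 0 < n) :
    ∃ C : ℝ, 0 < C ∧
    ∀ (f : EuclideanSpace ℝ (Fin n) → ℂ) (M : ℝ),
      Measurable f → (∃ R : ℝ, ∀ x, ‖f x‖ ≤ R) →
      (Function.support f ⊆ {x : EuclideanSpace ℝ (Fin n) | ∀ i, |x i| ≤ 1 / 4}) →
      (∀ k : Fin n → ℤ,
        ‖∫ x : EuclideanSpace ℝ (Fin n),
            f x * Complex.exp (-(2 * (π : ℂ) * Complex.I) * (∑ i, (k i : ℂ) * (x i : ℂ)))‖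
          ≤ M) →
      ∀ ξ : EuclideanSpace ℝ (Fin n),
        ‖∫ x : EuclideanSpace ℝ (Fin n),
            f x * Complex.exp (-(2 * (π : ℂ) * Complex.I) * (∑ i, (ξ i : ℂ) * (x i : ℂ)))‖
          ≤ C * M := by
  obtain ⟨S, hSpos, hS⟩ := pfb_key1d
  refine ⟨S ^ n, pow_pos hSpos n, ?_⟩
  intro f M hmeas hbdd hsupp hcoef ξ
  obtain ⟨R, hR⟩ := hbdd
  have hM0 : 0 ≤ M := le_trans (norm_nonneg _) (hcoef 0)
  -- the cube
  set cube : Set (EuclideanSpace ℝ (Fin n)) := {x | ∀ i, |x i| ≤ 1/4} with hcube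
  have hcube_closed : IsClosed cube := by
    have : cube = ⋂ i, (fun x : EuclideanSpace ℝ (Fin n) => x i) ⁻¹' Set.Icc (-(1/4)) (1/4) := by
      ext x
      simp [hcube, abs_le, Set.mem_iInter]
    rw [this]
    exact isClosed_iInter fun i =>
      (isClosed_Icc).preimage (EuclideanSpace.proj i).continuous
  have hcube_meas : MeasurableSet cube := hcube_closed.measurableSet
  have hcube_bdd : cube ⊆ Metric.closedBall 0 n := by
    intro x hx
    rw [Metric.mem_closedBall, dist_zero_right, EuclideanSpace.norm_eq]
    have hsum : (∑ i, ‖x i‖ ^ 2) ≤ (n : ℝ) := by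
      calc (∑ i, ‖x i‖ ^ 2) ≤ ∑ _i : Fin n, (1:ℝ) := by
            apply Finset.sum_le_sum
            intro i _
            have := hx i
            rw [Real.norm_eq_abs]
            nlinarith [abs_nonneg (x i)]
        _ = (n : ℝ) := by simp
    have hn1 : (1:ℝ) ≤ (n:ℝ) := by exact_mod_cast hn
    calc Real.sqrt (∑ i, ‖x i‖ ^ 2) ≤ Real.sqrt ((n:ℝ) ^ 2) :=
          Real.sqrt_le_sqrt (hsum.trans (by nlinarith))
      _ = (n:ℝ) := Real.sqrt_sq (Nat.cast_nonneg n)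
  have hcube_fin : volume cube < ⊤ :=
    lt_of_le_of_lt (measure_mono hcube_bdd) measure_closedBall_lt_top
  -- integrability of f
  have hint : Integrable f := by
    apply Integrable.mono' (g := cube.indicator fun _ => R)
    · rw [integrable_indicator_iff hcube_meas]
      exact integrableOn_const hcube_fin.ne
    · exact hmeas.aestronglyMeasurable
    · filter_upwards with x
      by_cases hx : x ∈ cube
      · rw [Set.indicator_of_mem hx]
        exact hR x
      · rw [Set.indicator_of_notMem hx]
        have hfx : f x = 0 := by
          by_contra h
          exact hx (hsupp (Function.mem_support.mpr h))
        simp [hfx]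
  -- 1D coefficients and their products
  set c : ℝ → ℤ → ℂ := fun t k => 𝓕 pfbChi (t + k) with hc
  set CP : (Fin n → ℤ) → ℂ := fun K => ∏ i, c (ξ i) (K i) with hCP
  have hsummc : ∀ i : Fin n, Summable fun k : ℤ => ‖c (ξ i) k‖ := fun i => (hS (ξ i)).1
  obtain ⟨hpiRsumm, hpiReq⟩ := pfb_pi_tsum (𝕜 := ℝ) (fun i k => ‖c (ξ i) k‖)
    (fun i => (hsummc i).congr fun k => (norm_norm _).symm)
  have hnormCP : ∀ K : Fin n → ℤ, ‖CP K‖ = ∏ i, ‖c (ξ i) (K i)‖ := fun K => norm_prod _ _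
  have hsummCP : Summable fun K : Fin n → ℤ => ‖CP K‖ := by
    have h1 : Summable fun K : Fin n → ℤ => ∏ i, ‖c (ξ i) (K i)‖ :=
      hpiRsumm.congr fun K => Real.norm_of_nonneg (Finset.prod_nonneg fun i _ => norm_nonneg _)
    exact h1.congr fun K => (hnormCP K).symm
  have htsumCP : (∑' K : Fin n → ℤ, ‖CP K‖) ≤ S ^ n := by
    calc (∑' K : Fin n → ℤ, ‖CP K‖) = ∑' K : Fin n → ℤ, ∏ i, ‖c (ξ i) (K i)‖ :=
          tsum_congr hnormCP
      _ = ∏ i, ∑' k, ‖c (ξ i) k‖ := hpiReq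
      _ ≤ ∏ _i : Fin n, S :=
          Finset.prod_le_prod (fun i _ => tsum_nonneg fun k => norm_nonneg _)
            (fun i _ => (hS (ξ i)).2.1)
      _ = S ^ n := by rw [Finset.prod_const, Finset.card_univ, Fintype.card_fin]
  -- the expansion terms
  set P : (Fin n → ℤ) → EuclideanSpace ℝ (Fin n) → ℂ := fun K x =>
    CP K * (f x * Complex.exp (((∑ i, 2 * π * (K i : ℝ) * x i : ℝ)) * Complex.I)) with hP
  -- pointwise expansion
  have hpt : ∀ x : EuclideanSpace ℝ (Fin n),
      f x * Complex.exp (-(2 * (π:ℂ) * Complex.I) * (∑ i, (ξ i : ℂ) * (x i : ℂ)))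
        = ∑' K : Fin n → ℤ, P K x := by
    intro x
    by_cases hfx : f x = 0
    · simp [hP, hfx]
    · have hxcube : x ∈ cube := hsupp (Function.mem_support.mpr hfx)
      set F : Fin n → ℤ → ℂ := fun i k =>
        c (ξ i) k * Complex.exp (((2 * π * k * x i : ℝ)) * Complex.I) with hF
      have hFsumm : ∀ i, Summable fun k => ‖F i k‖ := by
        intro i
        apply (hsummc i).congr
        intro k
        rw [hF]
        dsimp only
        rw [norm_mul, pfb_norm_exp_I_mul, mul_one]
      obtain ⟨hFs, hFeq⟩ := pfb_pi_tsum F hFsumm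
      have h1d : ∀ i, (∑' k, F i k)
          = Complex.exp (-(2 * (π:ℂ) * Complex.I) * (ξ i) * (x i)) :=
        fun i => ((hS (ξ i)).2.2 (x i) (hxcube i)).tsum_eq
      have hsplit : Complex.exp (-(2 * (π:ℂ) * Complex.I) * (∑ i, (ξ i : ℂ) * (x i : ℂ)))
          = ∏ i, Complex.exp (-(2 * (π:ℂ) * Complex.I) * (ξ i) * (x i)) := by
        rw [← Complex.exp_sum]
        congr 1
        rw [Finset.mul_sum]
        exact Finset.sum_congr rfl fun i _ => by ring
      have hterm : ∀ K : Fin n → ℤ, (∏ i, F i (K i))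
          = CP K * Complex.exp (((∑ i, 2 * π * (K i : ℝ) * x i : ℝ)) * Complex.I) := by
        intro K
        rw [Finset.prod_mul_distrib]
        congr 1
        rw [← Complex.exp_sum]
        congr 1
        push_cast
        rw [Finset.sum_mul]
      calc f x * Complex.exp (-(2 * (π:ℂ) * Complex.I) * (∑ i, (ξ i : ℂ) * (x i : ℂ)))
          = f x * ∏ i, Complex.exp (-(2 * (π:ℂ) * Complex.I) * (ξ i) * (x i)) := by
            rw [hsplit]
        _ = f x * ∏ i, ∑' k, F i k := by
            rw [Finset.prod_congr rfl fun i _ => (h1d i).symm]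
        _ = f x * ∑' K : Fin n → ℤ, ∏ i, F i (K i) := by rw [hFeq]
        _ = ∑' K : Fin n → ℤ, f x * ∏ i, F i (K i) := tsum_mul_left.symm
        _ = ∑' K : Fin n → ℤ, P K x := tsum_congr fun K => by rw [hterm K, hP]; ring
  -- measurability of the terms
  have hPmeas : ∀ K : Fin n → ℤ, AEStronglyMeasurable (P K) volume := by
    intro K
    have hsumcont : Continuous fun x : EuclideanSpace ℝ (Fin n) =>
        ∑ i, 2 * π * (K i : ℝ) * x i :=
      continuous_finset_sum _ fun i _ => continuous_const.mul (EuclideanSpace.proj i).continuous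
    have hexp_cont : Continuous fun x : EuclideanSpace ℝ (Fin n) =>
        Complex.exp (((∑ i, 2 * π * (K i : ℝ) * x i : ℝ)) * Complex.I) :=
      Complex.continuous_exp.comp ((Complex.continuous_ofReal.comp hsumcont).mul continuous_const)
    exact ((hmeas.mul hexp_cont.measurable).const_mul (CP K)).aestronglyMeasurable
  -- the lintegral bound
  have hnnexp : ∀ r : ℝ, ‖Complex.exp ((r : ℂ) * Complex.I)‖₊ = 1 := by
    intro r
    ext
    simpa using pfb_norm_exp_I_mul r
  have hfmeas_nn : Measurable fun x : EuclideanSpace ℝ (Fin n) => (‖f x‖₊ : ENNReal) :=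
    measurable_coe_nnreal_ennreal.comp hmeas.nnnorm
  have hL : (∫⁻ x, ‖f x‖₊ ∂volume) ≠ ⊤ := hint.hasFiniteIntegral.ne
  have hCPsummNN : Summable fun K : Fin n → ℤ => ‖CP K‖₊ :=
    NNReal.summable_coe.mp (hsummCP.congr fun K => (coe_nnnorm _).symm)
  have hCPtop : (∑' K : Fin n → ℤ, (‖CP K‖₊ : ENNReal)) ≠ ⊤ :=
    ENNReal.tsum_coe_ne_top_iff_summable.mpr hCPsummNN
  have hlint : (∑' K : Fin n → ℤ, ∫⁻ x, ‖P K x‖₊ ∂volume) ≠ ⊤ := by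
    have hPlint : ∀ K : Fin n → ℤ, (∫⁻ x, ‖P K x‖₊ ∂volume)
        = (‖CP K‖₊ : ENNReal) * ∫⁻ x, ‖f x‖₊ ∂volume := by
      intro K
      have heq : ∀ x, (‖P K x‖₊ : ENNReal) = (‖CP K‖₊ : ENNReal) * ‖f x‖₊ := by
        intro x
        rw [hP]
        dsimp only
        rw [nnnorm_mul, nnnorm_mul, hnnexp, mul_one, ENNReal.coe_mul]
      simp_rw [heq]
      exact lintegral_const_mul _ hmeas.nnnorm.coe_nnreal_ennreal
    simp_rw [hPlint]
    rw [ENNReal.tsum_mul_right]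
    exact ENNReal.mul_ne_top hCPtop hL
  -- swap integral and sum
  have hswap : (∫ x : EuclideanSpace ℝ (Fin n),
      f x * Complex.exp (-(2 * (π:ℂ) * Complex.I) * (∑ i, (ξ i : ℂ) * (x i : ℂ))))
      = ∑' K : Fin n → ℤ, ∫ x, P K x := by
    rw [show (fun x : EuclideanSpace ℝ (Fin n) =>
        f x * Complex.exp (-(2 * (π:ℂ) * Complex.I) * (∑ i, (ξ i : ℂ) * (x i : ℂ))))
        = fun x => ∑' K : Fin n → ℤ, P K x from funext hpt]
    exact integral_tsum hPmeas hlint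
  -- each summed integral is bounded
  have hJ : ∀ K : Fin n → ℤ,
      ‖∫ x : EuclideanSpace ℝ (Fin n),
        f x * Complex.exp (((∑ i, 2 * π * (K i : ℝ) * x i : ℝ)) * Complex.I)‖ ≤ M := by
    intro K
    have hE : ∀ x : EuclideanSpace ℝ (Fin n),
        (((∑ i, 2 * π * (K i : ℝ) * x i : ℝ)) : ℂ) * Complex.I
          = -(2 * (π:ℂ) * Complex.I) * (∑ i, ((((fun j => -(K j)) i : ℤ)) : ℂ) * (x i : ℂ)) := by
      intro x
      push_cast
      rw [Finset.sum_mul, Finset.mul_sum]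
      exact Finset.sum_congr rfl fun i _ => by ring
    simp_rw [hE]
    exact hcoef fun j => -(K j)
  have hPint : ∀ K : Fin n → ℤ, (∫ x, P K x)
      = CP K * ∫ x : EuclideanSpace ℝ (Fin n),
          f x * Complex.exp (((∑ i, 2 * π * (K i : ℝ) * x i : ℝ)) * Complex.I) := by
    intro K
    simp_rw [hP]
    exact integral_const_mul _ _
  have hterm_bound : ∀ K : Fin n → ℤ, ‖∫ x, P K x‖ ≤ ‖CP K‖ * M := by
    intro K
    rw [hPint K, norm_mul]
    exact mul_le_mul_of_nonneg_left (hJ K) (norm_nonneg _)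
  have hsummP : Summable fun K : Fin n → ℤ => ‖∫ x, P K x‖ :=
    Summable.of_nonneg_of_le (fun K => norm_nonneg _) hterm_bound (hsummCP.mul_right M)
  rw [hswap]
  calc ‖∑' K : Fin n → ℤ, ∫ x, P K x‖ ≤ ∑' K : Fin n → ℤ, ‖∫ x, P K x‖ :=
        norm_tsum_le_tsum_norm hsummP
    _ ≤ ∑' K : Fin n → ℤ, ‖CP K‖ * M :=
        Summable.tsum_le_tsum hterm_bound hsummP (hsummCP.mul_right M)
    _ = (∑' K : Fin n → ℤ, ‖CP K‖) * M := tsum_mul_right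
    _ ≤ S ^ n * M := mul_le_mul_of_nonneg_right htsumCP hM0
end

section
/- Diophantine reduction from ℝ to ℤ: Suppose that for all ℓ ≥ 1, d_1, …, d_ℓ ∈ ℕ₀, α_j ∈ ℝ^{d_j}, ε > 0, and N ≥ 1, one has N^{-1} #{ n ∈ ℤ, |n| ≤ N : ‖nʲ α_j‖_{𝕋^{d_j}} ≤ ε for all j ∈ [ℓ] } ≥ c(ε, ℓ, (d_j)) > 0. Then for any fixed c > 0, ℓ ≥ 1, d_j ∈ ℕ₀, ξ_j ∈ ℝ^{d_j}, and ε > 0, the Lebesgue measure of { y ∈ [−c, c] : ‖yʲ ξ_j‖_{𝕋^{d_j}} ≤ ε for all j ∈ [ℓ] } is bounded below by a positive constant depending only on ε, ℓ, c and (d_j) (and not on the ξ_j). -/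
open MeasureTheory
open scoped ENNReal

lemma coe_sum_addCircle {ι : Type*} (s : Finset ι) (f : ι → ℝ) :
    ((∑ k ∈ s, f k : ℝ) : AddCircle (1:ℝ)) = ∑ k ∈ s, ((f k : ℝ) : AddCircle (1:ℝ)) :=
  map_sum (QuotientAddGroup.mk' _) f s

lemma coe_add_sum_addCircle {ι : Type*} (s : Finset ι) (x : ℝ) (g : ι → ℝ) :
    ((x + ∑ k ∈ s, g k : ℝ) : AddCircle (1:ℝ))
      = (x : AddCircle (1:ℝ)) + ∑ k ∈ s, ((g k : ℝ) : AddCircle (1:ℝ)) := by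
  rw [show ((x + ∑ k ∈ s, g k : ℝ) : AddCircle (1:ℝ))
      = (x : AddCircle (1:ℝ)) + ((∑ k ∈ s, g k : ℝ) : AddCircle (1:ℝ)) from rfl,
    coe_sum_addCircle]

lemma norm_coe_addCircle_le (r : ℝ) : ‖(r : AddCircle (1:ℝ))‖ ≤ |r| := by
  rw [← Real.norm_eq_abs]; exact QuotientAddGroup.norm_mk_le_norm

lemma binom_decomp (n u a x : ℝ) (j L : ℕ) (hj : j < L) :
    ((n + u) * a) ^ (j+1) * x
      = u^(j+1) * a^(j+1) * x +
        ∑ k ∈ Finset.range L, n^(k+1) *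
          (if k ≤ j then ((j+1).choose (k+1) : ℝ) * u^(j-k) * a^(j+1) * x else 0) := by
  have h1 : ∑ k ∈ Finset.range L, n^(k+1) *
      (if k ≤ j then ((j+1).choose (k+1) : ℝ) * u^(j-k) * a^(j+1) * x else 0)
      = ∑ k ∈ Finset.range (j+1), n^(k+1) * (((j+1).choose (k+1) : ℝ) * u^(j-k) * a^(j+1) * x) := by
    rw [← Finset.sum_subset (Finset.range_subset_range.2 hj)]
    · refine Finset.sum_congr rfl fun k hk => ?_
      rw [if_pos (Nat.lt_succ_iff.mp (Finset.mem_range.mp hk))]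
    · intro k _ hk
      rw [if_neg (fun h => hk (Finset.mem_range.mpr (Nat.lt_succ_iff.mpr h))), mul_zero]
  rw [h1, mul_pow, add_pow]
  rw [Finset.sum_range_succ' (fun k => n ^ k * u ^ (j + 1 - k) * ((j+1).choose k : ℝ)) (j+1)]
  simp only [pow_zero, Nat.choose_zero_right, Nat.cast_one, one_mul, mul_one,
    Nat.succ_sub_succ_eq_sub]
  rw [add_mul, add_mul, Finset.sum_mul, Finset.sum_mul]
  rw [add_comm]
  congr 1
  · refine Finset.sum_congr rfl fun k hk => ?_
    ring


/-- Diophantine reduction from `ℝ` to `ℤ`: if for all `ℓ ≥ 1`, `d_1, …, d_ℓ`,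
`α_j ∈ ℝ^{d_j}`, `ε > 0` and `N ≥ 1` the proportion of integers `|n| ≤ N` with
`‖nʲ α_j‖_{𝕋^{d_j}} ≤ ε` for all `j` is bounded below by a positive constant depending
only on `ε, ℓ, (d_j)`, then for any `c > 0`, `ℓ ≥ 1`, `d_j`, `ε > 0` the Lebesgue measure
of `{y ∈ [−c,c] : ‖yʲ ξ_j‖_{𝕋^{d_j}} ≤ ε ∀ j}` is bounded below by a positive constant
depending only on `ε, ℓ, c, (d_j)` (not on the `ξ_j`). -/
theorem diophantine_reduction_real_of_int
    (hZ : ∀ (ℓ : ℕ), 1 ≤ ℓ → ∀ (d : Fin ℓ → ℕ) (ε : ℝ), 0 < ε →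
      ∃ c : ℝ, 0 < c ∧ ∀ (α : (j : Fin ℓ) → Fin (d j) → ℝ) (N : ℕ), 1 ≤ N →
        c ≤ (N : ℝ)⁻¹ *
          (Set.ncard {nn : ℤ | |nn| ≤ (N : ℤ) ∧ ∀ (j : Fin ℓ) (i : Fin (d j)),
            ‖(((nn : ℝ) ^ ((j : ℕ) + 1) * α j i : ℝ) : AddCircle (1 : ℝ))‖ ≤ ε} : ℝ)) :
    ∀ (c : ℝ), 0 < c → ∀ (ℓ : ℕ), 1 ≤ ℓ → ∀ (d : Fin ℓ → ℕ) (ε : ℝ), 0 < ε →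
      ∃ κ : ℝ, 0 < κ ∧ ∀ ξ : (j : Fin ℓ) → Fin (d j) → ℝ,
        ENNReal.ofReal κ ≤
          volume {y : ℝ | y ∈ Set.Icc (-c) c ∧ ∀ (j : Fin ℓ) (i : Fin (d j)),
            ‖((y ^ ((j : ℕ) + 1) * ξ j i : ℝ) : AddCircle (1 : ℝ))‖ ≤ ε} := by
  intro c hc ℓ hℓ d ε hε
  have hℓpos : (0:ℝ) < ℓ := by exact_mod_cast hℓ
  set ε' : ℝ := ε / (2 * ℓ) with hε'def
  have hε' : 0 < ε' := by positivity
  obtain ⟨c₀, hc₀, hbound⟩ :=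
    hZ ℓ hℓ (fun _ => Fintype.card ((j : Fin ℓ) × Fin (d j))) ε' hε'
  refine ⟨c₀ * c / 2, by positivity, fun ξ => ?_⟩
  set D : ℕ := Fintype.card ((j : Fin ℓ) × Fin (d j)) with hDdef
  set e : ((j : Fin ℓ) × Fin (d j)) ≃ Fin D := Fintype.equivFin _ with hedef
  -- choose N
  set M : ℝ := 1 + ∑ j, ∑ i, |ξ j i| with hMdef
  have hM : 0 < M := by
    have : (0:ℝ) ≤ ∑ j, ∑ i, |ξ j i| :=
      Finset.sum_nonneg fun j _ => Finset.sum_nonneg fun i _ => abs_nonneg _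
    rw [hMdef]; linarith
  have hξM : ∀ j i, |ξ j i| ≤ M := by
    intro j i
    have h1 : |ξ j i| ≤ ∑ i', |ξ j i'| :=
      Finset.single_le_sum (f := fun i' => |ξ j i'|) (fun i' _ => abs_nonneg _)
        (Finset.mem_univ i)
    have h2 : ∑ i', |ξ j i'| ≤ ∑ j', ∑ i', |ξ j' i'| :=
      Finset.single_le_sum (f := fun j' => ∑ i', |ξ j' i'|)
        (fun j' _ => Finset.sum_nonneg fun i' _ => abs_nonneg _) (Finset.mem_univ j)
    rw [hMdef]; linarith
  obtain ⟨N, hNge⟩ := exists_nat_ge (max (max c (2 * c * M / ε)) (max 1 (2 / c₀)))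
  have hNc : c ≤ (N:ℝ) := ((le_max_left _ _).trans (le_max_left _ _)).trans hNge
  have hNM : 2 * c * M / ε ≤ (N:ℝ) := ((le_max_right _ _).trans (le_max_left _ _)).trans hNge
  have hN1 : (1:ℝ) ≤ (N:ℝ) := ((le_max_left _ _).trans (le_max_right _ _)).trans hNge
  have hNc₀ : 2 / c₀ ≤ (N:ℝ) := ((le_max_right _ _).trans (le_max_right _ _)).trans hNge
  have hN0 : (0:ℝ) < N := lt_of_lt_of_le one_pos hN1
  have hN1' : 1 ≤ N := by exact_mod_cast hN1
  set a : ℝ := c / N with hadef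
  have ha : 0 < a := div_pos hc hN0
  have ha1 : a ≤ 1 := by rw [hadef, div_le_one hN0]; exact hNc
  have haN : a * N = c := by rw [hadef]; field_simp
  clear_value ε' M a
  -- the coefficient vectors
  set α' : ℝ → (k : Fin ℓ) → Fin D → ℝ := fun u k m =>
    if (k : ℕ) ≤ ((e.symm m).1 : ℕ) then
      (((((e.symm m).1 : ℕ)+1).choose ((k:ℕ)+1)) : ℝ) * u ^ (((e.symm m).1 : ℕ) - (k:ℕ))
        * a ^ (((e.symm m).1 : ℕ)+1) * ξ (e.symm m).1 (e.symm m).2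
    else 0 with hα'def
  set Q : ℤ → ℝ → Prop := fun n u => ∀ (k : Fin ℓ) (m : Fin D),
    ‖(((n:ℝ) ^ ((k:ℕ)+1) * α' u k m : ℝ) : AddCircle (1:ℝ))‖ ≤ ε' with hQdef
  set S : Set ℝ := {y : ℝ | y ∈ Set.Icc (-c) c ∧ ∀ (j : Fin ℓ) (i : Fin (d j)),
    ‖((y ^ ((j : ℕ) + 1) * ξ j i : ℝ) : AddCircle (1 : ℝ))‖ ≤ ε} with hSdef
  set F : Finset ℤ := Finset.Icc (-(N:ℤ)) ((N:ℤ)-1) with hFdef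
  set T : ℤ → Set ℝ := fun n => Set.Ico (0:ℝ) 1 ∩ {u : ℝ | Q n u} with hTdef
  set W : ℤ → Set ℝ := fun n => S ∩ Set.Ico ((n:ℝ)*a) (((n:ℝ)+1)*a) with hWdef
  -- measurability
  have hcoe_cont : Continuous (fun x : ℝ => (x : AddCircle (1:ℝ))) := AddCircle.continuous_mk' 1
  have hSmeas : MeasurableSet S := by
    have hS_eq : S = Set.Icc (-c) c ∩ ⋂ (j : Fin ℓ), ⋂ (i : Fin (d j)),
        {y : ℝ | ‖((y ^ ((j : ℕ) + 1) * ξ j i : ℝ) : AddCircle (1 : ℝ))‖ ≤ ε} := by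
      ext y
      simp only [hSdef, Set.mem_setOf_eq, Set.mem_inter_iff, Set.mem_iInter]
    rw [hS_eq]
    refine measurableSet_Icc.inter (MeasurableSet.iInter fun j => MeasurableSet.iInter fun i => ?_)
    refine (isClosed_le ?_ continuous_const).measurableSet
    exact continuous_norm.comp (hcoe_cont.comp (by fun_prop))
  have hTmeas : ∀ n : ℤ, MeasurableSet (T n) := by
    intro n
    refine measurableSet_Ico.inter ?_
    have hQ_eq : {u : ℝ | Q n u} = ⋂ (k : Fin ℓ), ⋂ (m : Fin D),
        {u : ℝ | ‖(((n:ℝ) ^ ((k:ℕ)+1) * α' u k m : ℝ) : AddCircle (1:ℝ))‖ ≤ ε'} := by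
      ext u
      simp only [hQdef, Set.mem_setOf_eq, Set.mem_iInter]
    rw [hQ_eq]
    refine MeasurableSet.iInter fun k => MeasurableSet.iInter fun m => ?_
    refine (isClosed_le ?_ continuous_const).measurableSet
    refine continuous_norm.comp (hcoe_cont.comp ?_)
    have hα'c : Continuous fun u : ℝ => α' u k m := by
      by_cases h : (k : ℕ) ≤ ((e.symm m).1 : ℕ)
      · simp only [hα'def, if_pos h]; fun_prop
      · simp only [hα'def, if_neg h]; exact continuous_const
    fun_prop
  -- key pointwise lemma
  have hkey : ∀ n : ℤ, n ∈ F → ∀ u : ℝ, u ∈ T n → ((n:ℝ) + u) * a ∈ W n := by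
    intro n hn u hu
    obtain ⟨⟨hu0, hu1⟩, hQu⟩ := hu
    rw [hFdef, Finset.mem_Icc] at hn
    have hnl : (-(N:ℝ)) ≤ (n:ℝ) := by exact_mod_cast hn.1
    have hnu : (n:ℝ) ≤ (N:ℝ) - 1 := by
      have h := hn.2
      have : (n:ℝ) ≤ ((N:ℤ) - 1 : ℤ) := by exact_mod_cast h
      push_cast at this; linarith
    refine ⟨⟨⟨?_, ?_⟩, ?_⟩, ?_, ?_⟩
    · have h := mul_le_mul_of_nonneg_right (show -(N:ℝ) ≤ (n:ℝ) + u by linarith) ha.le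
      linarith [haN, h]
    · have h := mul_le_mul_of_nonneg_right (show (n:ℝ) + u ≤ (N:ℝ) by linarith) ha.le
      linarith [haN, h]
    · -- norm conditions
      intro j i
      have hα'e : ∀ k : Fin ℓ, α' u k (e ⟨j, i⟩)
          = (if (k:ℕ) ≤ (j:ℕ) then (((j:ℕ)+1).choose ((k:ℕ)+1) : ℝ) * u^((j:ℕ)-(k:ℕ))
              * a^((j:ℕ)+1) * ξ j i else 0) := by
        intro k
        have hsymm : e.symm (e ⟨j, i⟩) = ⟨j, i⟩ := e.symm_apply_apply _
        simp only [hα'def]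
        rw [hsymm]
      have hsum : ∑ k ∈ Finset.range ℓ, (n:ℝ)^(k+1) *
          (if k ≤ (j:ℕ) then (((j:ℕ)+1).choose (k+1) : ℝ) * u^((j:ℕ)-k) * a^((j:ℕ)+1) * ξ j i
            else 0)
          = ∑ k : Fin ℓ, (n:ℝ)^((k:ℕ)+1) * α' u k (e ⟨j, i⟩) := by
        rw [← Fin.sum_univ_eq_sum_range (fun k => (n:ℝ)^(k+1) *
          (if k ≤ (j:ℕ) then (((j:ℕ)+1).choose (k+1) : ℝ) * u^((j:ℕ)-k) * a^((j:ℕ)+1) * ξ j i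
            else 0)) ℓ]
        exact Finset.sum_congr rfl fun k _ => by rw [hα'e k]
      have hid : (((n:ℝ) + u) * a) ^ ((j:ℕ)+1) * ξ j i
          = u^((j:ℕ)+1) * a^((j:ℕ)+1) * ξ j i
            + ∑ k : Fin ℓ, (n:ℝ)^((k:ℕ)+1) * α' u k (e ⟨j, i⟩) := by
        rw [← hsum]
        exact binom_decomp (n:ℝ) u a (ξ j i) (j:ℕ) ℓ j.isLt
      rw [hid, coe_add_sum_addCircle]
      refine le_trans (norm_add_le _ _) ?_
      have h1 : ‖((u^((j:ℕ)+1) * a^((j:ℕ)+1) * ξ j i : ℝ) : AddCircle (1:ℝ))‖ ≤ ε/2 := by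
        refine le_trans (norm_coe_addCircle_le _) ?_
        rw [abs_mul, abs_mul]
        have e1 : |u ^ ((j:ℕ)+1)| ≤ 1 := by
          rw [abs_pow, abs_of_nonneg hu0]
          exact pow_le_one₀ hu0 hu1.le
        have e2 : |a ^ ((j:ℕ)+1)| ≤ a := by
          rw [abs_pow, abs_of_nonneg ha.le]
          exact pow_le_of_le_one ha.le ha1 (Nat.succ_ne_zero _)
        have e3 : |ξ j i| ≤ M := hξM j i
        have h5 : |u ^ ((j:ℕ)+1)| * |a ^ ((j:ℕ)+1)| ≤ a := by
          have h6 := mul_le_mul e1 e2 (abs_nonneg _) zero_le_one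
          rw [one_mul] at h6
          exact h6
        have e4 : |u ^ ((j:ℕ)+1)| * |a ^ ((j:ℕ)+1)| * |ξ j i| ≤ a * M :=
          mul_le_mul h5 e3 (abs_nonneg _) ha.le
        have e5 : a * M ≤ ε / 2 := by
          rw [hadef, div_mul_eq_mul_div, div_le_iff₀ hN0]
          rw [div_le_iff₀ hε] at hNM
          linarith
        linarith
      have h2 : ‖∑ k : Fin ℓ, (((n:ℝ)^((k:ℕ)+1) * α' u k (e ⟨j, i⟩) : ℝ) : AddCircle (1:ℝ))‖
          ≤ (ℓ:ℝ) * ε' := by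
        refine le_trans (norm_sum_le _ _) ?_
        have : ∀ k : Fin ℓ, k ∈ Finset.univ →
            ‖(((n:ℝ)^((k:ℕ)+1) * α' u k (e ⟨j, i⟩) : ℝ) : AddCircle (1:ℝ))‖ ≤ ε' :=
          fun k _ => hQu k (e ⟨j, i⟩)
        calc ∑ k : Fin ℓ, ‖(((n:ℝ)^((k:ℕ)+1) * α' u k (e ⟨j, i⟩) : ℝ) : AddCircle (1:ℝ))‖
            ≤ ∑ _k : Fin ℓ, ε' := Finset.sum_le_sum this
          _ = (ℓ:ℝ) * ε' := by
            rw [Finset.sum_const, Finset.card_univ, Fintype.card_fin, nsmul_eq_mul]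
      have hℓε' : (ℓ:ℝ) * ε' = ε / 2 := by
        rw [hε'def]; field_simp
      linarith
    · -- n*a ≤ (n+u)*a
      have : (n:ℝ) ≤ (n:ℝ) + u := by linarith
      exact mul_le_mul_of_nonneg_right this ha.le
    · have : (n:ℝ) + u < (n:ℝ) + 1 := by linarith
      exact mul_lt_mul_of_pos_right this ha
  -- counting lemma
  have hcount : ∀ u : ℝ, u ∈ Set.Ico (0:ℝ) 1 →
      (c₀ * N / 2 : ℝ) ≤ ((F.filter fun n => u ∈ T n).card : ℝ) := by
    intro u hu
    have hb := hbound (α' u) N hN1'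
    set A : Set ℤ := {nn : ℤ | |nn| ≤ (N:ℤ) ∧ ∀ (k : Fin ℓ) (m : Fin D),
      ‖(((nn:ℝ) ^ ((k:ℕ)+1) * α' u k m : ℝ) : AddCircle (1:ℝ))‖ ≤ ε'} with hAdef
    have hcard : c₀ * N ≤ (A.ncard : ℝ) := by
      rw [← div_eq_inv_mul] at hb
      have : c₀ ≤ (A.ncard : ℝ) / N := hb
      rw [le_div_iff₀ hN0] at this
      linarith
    have hsub : A ⊆ (↑(F.filter fun n => u ∈ T n) : Set ℤ) ∪ {(N:ℤ)} := by
      intro n hn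
      obtain ⟨hn1, hn2⟩ := hn
      by_cases hnN : n = (N:ℤ)
      · exact Or.inr (by simp [hnN])
      · left
        simp only [Finset.coe_filter, Set.mem_setOf_eq, hFdef, Finset.mem_Icc]
        have habs := abs_le.mp hn1
        exact ⟨⟨habs.1, by omega⟩, hu, hn2⟩
    have h1 : A.ncard ≤ (F.filter fun n => u ∈ T n).card + 1 := by
      calc A.ncard ≤ ((↑(F.filter fun n => u ∈ T n) : Set ℤ) ∪ {(N:ℤ)}).ncard :=
            Set.ncard_le_ncard hsub ((Finset.finite_toSet _).union (Set.finite_singleton _))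
        _ ≤ (↑(F.filter fun n => u ∈ T n) : Set ℤ).ncard + ({(N:ℤ)} : Set ℤ).ncard :=
            Set.ncard_union_le _ _
        _ = (F.filter fun n => u ∈ T n).card + 1 := by
            rw [Set.ncard_coe_finset, Set.ncard_singleton]
    have h2 : (2:ℝ) ≤ c₀ * N := by
      rw [div_le_iff₀ hc₀] at hNc₀
      linarith
    have h3 : (A.ncard : ℝ) ≤ ((F.filter fun n => u ∈ T n).card : ℝ) + 1 := by exact_mod_cast h1
    linarith
  -- step 3 : sum of measures of T n
  have hsum3 : ENNReal.ofReal (c₀ * N / 2) ≤ ∑ n ∈ F, volume (T n) := by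
    have heq : ∀ n ∈ F, volume (T n) = ∫⁻ u, (T n).indicator (fun _ => (1:ℝ≥0∞)) u := by
      intro n _
      rw [lintegral_indicator (hTmeas n), setLIntegral_const, one_mul]
    rw [Finset.sum_congr rfl heq,
      ← lintegral_finset_sum _ (fun n _ => measurable_const.indicator (hTmeas n))]
    have hpt : ∀ u : ℝ,
        (Set.Ico (0:ℝ) 1).indicator (fun _ => ENNReal.ofReal (c₀ * N / 2)) u
          ≤ ∑ n ∈ F, (T n).indicator (fun _ => (1:ℝ≥0∞)) u := by
      intro u
      by_cases hu : u ∈ Set.Ico (0:ℝ) 1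
      · rw [Set.indicator_of_mem hu]
        have hcardeq : ∑ n ∈ F, (T n).indicator (fun _ => (1:ℝ≥0∞)) u
            = ((F.filter fun n => u ∈ T n).card : ℝ≥0∞) := by
          simp only [Set.indicator_apply]
          rw [Finset.sum_boole]
        rw [hcardeq]
        calc ENNReal.ofReal (c₀ * N / 2)
            ≤ ENNReal.ofReal ((F.filter fun n => u ∈ T n).card : ℝ) :=
              ENNReal.ofReal_le_ofReal (hcount u hu)
          _ = ((F.filter fun n => u ∈ T n).card : ℝ≥0∞) := ENNReal.ofReal_natCast _
      · rw [Set.indicator_of_notMem hu]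
        exact zero_le
    calc ENNReal.ofReal (c₀ * N / 2)
        = ∫⁻ u, (Set.Ico (0:ℝ) 1).indicator (fun _ => ENNReal.ofReal (c₀ * N / 2)) u := by
          rw [lintegral_indicator measurableSet_Ico, setLIntegral_const, Real.volume_Ico]
          simp
      _ ≤ _ := lintegral_mono hpt
  -- step 2 : comparison of T n and W n
  have hstep2 : ∀ n ∈ F, ENNReal.ofReal a * volume (T n) ≤ volume (W n) := by
    intro n hn
    have hsub : T n ⊆ (fun u : ℝ => ((n:ℝ) + u) * a) ⁻¹' W n := fun u hu => hkey n hn u hu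
    have hv : volume ((fun u : ℝ => ((n:ℝ) + u) * a) ⁻¹' W n)
        = ENNReal.ofReal |a⁻¹| * volume (W n) := by
      rw [show (fun u : ℝ => ((n:ℝ) + u) * a) ⁻¹' W n
          = (fun u : ℝ => (n:ℝ) + u) ⁻¹' ((fun x : ℝ => x * a) ⁻¹' W n) from rfl,
        measure_preimage_add, Real.volume_preimage_mul_right (ne_of_gt ha)]
    have h1 : volume (T n) ≤ ENNReal.ofReal |a⁻¹| * volume (W n) := hv ▸ measure_mono hsub
    calc ENNReal.ofReal a * volume (T n)
        ≤ ENNReal.ofReal a * (ENNReal.ofReal |a⁻¹| * volume (W n)) := mul_le_mul_right h1 _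
      _ = (ENNReal.ofReal a * ENNReal.ofReal a⁻¹) * volume (W n) := by
          rw [abs_of_nonneg (inv_nonneg.2 ha.le), mul_assoc]
      _ = volume (W n) := by
          rw [← ENNReal.ofReal_mul ha.le, mul_inv_cancel₀ (ne_of_gt ha), ENNReal.ofReal_one,
            one_mul]
  -- step 1 : disjointness
  have hmono : ∀ m n : ℤ, m < n → ((m:ℝ)+1)*a ≤ (n:ℝ)*a := by
    intro m n h
    have : (m:ℝ) + 1 ≤ (n:ℝ) := by exact_mod_cast h
    exact mul_le_mul_of_nonneg_right this ha.le
  have hdisj : (↑F : Set ℤ).PairwiseDisjoint W := by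
    intro m _ n _ hmn
    have hIco : Disjoint (Set.Ico ((m:ℝ)*a) (((m:ℝ)+1)*a)) (Set.Ico ((n:ℝ)*a) (((n:ℝ)+1)*a)) := by
      rw [Set.Ico_disjoint_Ico]
      rcases lt_or_gt_of_ne hmn with h | h
      · exact le_trans (min_le_left _ _) (le_trans (hmono m n h) (le_max_right _ _))
      · exact le_trans (min_le_right _ _) (le_trans (hmono n m h) (le_max_left _ _))
    exact Disjoint.mono Set.inter_subset_right Set.inter_subset_right hIco
  have hstep1 : ∑ n ∈ F, volume (W n) ≤ volume S := by
    rw [← measure_biUnion_finset hdisj (fun n _ => hSmeas.inter measurableSet_Ico)]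
    exact measure_mono (Set.iUnion₂_subset fun n _ => Set.inter_subset_left)
  -- final chain
  calc ENNReal.ofReal (c₀ * c / 2)
      = ENNReal.ofReal a * ENNReal.ofReal (c₀ * N / 2) := by
        rw [← ENNReal.ofReal_mul ha.le]
        congr 1
        rw [hadef]
        field_simp
    _ ≤ ENNReal.ofReal a * ∑ n ∈ F, volume (T n) := mul_le_mul_right hsum3 _
    _ = ∑ n ∈ F, ENNReal.ofReal a * volume (T n) := Finset.mul_sum _ _ _
    _ ≤ ∑ n ∈ F, volume (W n) := Finset.sum_le_sum hstep2
    _ ≤ volume S := hstep1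
end

section
/- Uniform L^{2+δ} moment bound for fractal measures via restriction: Let δ ∈ (0,1), β₀ ∈ (0,n), and let μ be a probability measure on ℝⁿ with μ(B(x,r)) ≤ A rᵅ and |μ̂(ξ)| ≤ B(1+|ξ|)^{−β/2}. Define p₀ = 2 + 4(n−α)/β. If the restriction estimate ‖f̂‖_{L²(dμ)} ≤ C_{n,β₀} max(A,B)^{p₀/(2p)} ‖f‖_{L^{p'}(ℝⁿ)} holds for p ≥ p₀ (as provided by the Bak–Seeger theorem), then uniformly for n − δβ₀/4 ≤ α < n and β₀ ≤ β < n, one has ‖μ̂‖_{L^{2+δ}(ℝⁿ)} ≲_{β₀,n,A} B^{1/2}. -/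
open MeasureTheory Real Complex
open scoped RealInnerProductSpace ENNReal

theorem norm_kernel' (r : ℝ) : ‖Complex.exp (-(2 * (π:ℂ) * Complex.I) * (r:ℂ))‖ = 1 := by
  rw [Complex.norm_exp]
  norm_num [Complex.mul_re]

theorem mySummable (n : ℕ) : Summable (fun k : ℕ => Real.exp (-π * k^2) * (k+1:ℝ)^n) := by
  have h1 : Summable (fun k : ℕ => ((k:ℝ)^n * (Real.exp (-π))^k)) :=
    summable_pow_mul_geometric_of_norm_lt_one n (by
      rw [Real.norm_eq_abs, abs_of_pos (Real.exp_pos _)]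
      exact Real.exp_lt_one_iff.mpr (neg_lt_zero.mpr Real.pi_pos))
  have h2 : Summable (fun k : ℕ => ((k+1:ℕ):ℝ)^n * (Real.exp (-π))^(k+1)) :=
    h1.comp_injective (add_left_injective 1)
  have h3 := h2.mul_left (Real.exp π)
  apply Summable.of_nonneg_of_le (fun k => by positivity) _ h3
  intro k
  rw [← Real.exp_nat_mul]
  push_cast
  have hk : (k:ℝ) ≤ (k:ℝ)^2 := by
    have := Nat.le_self_pow (two_ne_zero) k
    exact_mod_cast this
  have hπ := Real.pi_pos
  calc rexp (-π * k^2) * (↑k+1:ℝ)^n ≤ rexp (π + (↑k+1) * -π) * (↑k+1:ℝ)^n := by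
        gcongr
        · nlinarith
    _ = rexp π * ((↑k+1:ℝ)^n * rexp ((↑k+1) * -π)) := by rw [Real.exp_add]; ring

theorem integrable_gauss {W : Type*} [NormedAddCommGroup W] [InnerProductSpace ℝ W]
    [FiniteDimensional ℝ W] [MeasurableSpace W] [BorelSpace W] {b : ℝ} (hb : 0 < b) :
    Integrable (fun v : W => rexp (-b * ‖v‖^2)) := by
  have h := (GaussianFourier.integrable_cexp_neg_mul_sq_norm_add (b := (b:ℂ)) (by simpa using hb) 0 (0:W)).norm
  refine h.congr (Filter.Eventually.of_forall fun v => ?_)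
  norm_num [Complex.norm_exp]
  left
  rw [← Complex.ofReal_pow, Complex.ofReal_re]

theorem gauss_fourier {n : ℕ} (R : ℝ) (hR : 0 < R) (v : EuclideanSpace ℝ (Fin n)) :
    ∫ ξ : EuclideanSpace ℝ (Fin n),
        Complex.exp (-((π * R⁻¹^2 : ℝ) : ℂ) * ‖ξ‖^2 + (-(2 * (π:ℂ) * Complex.I)) * ((⟪v, ξ⟫ : ℝ) : ℂ))
      = ((R^n * rexp (-(π * R^2) * ‖v‖^2) : ℝ) : ℂ) := by
  have hb : (0:ℝ) < ((π * R⁻¹^2 : ℝ) : ℂ).re := by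
    rw [Complex.ofReal_re]
    exact mul_pos Real.pi_pos (pow_pos (inv_pos.mpr hR) 2)
  rw [GaussianFourier.integral_cexp_neg_mul_sq_norm_add hb (-(2 * (π:ℂ) * Complex.I)) v]
  have hπ : (π:ℝ) ≠ 0 := Real.pi_ne_zero
  have hRne : R ≠ 0 := ne_of_gt hR
  have h1 : ((π:ℂ) / ((π * R⁻¹^2 : ℝ) : ℂ)) = (((R^2 : ℝ)) : ℂ) := by
    push_cast
    field_simp
  have h2 : (Module.finrank ℝ (EuclideanSpace ℝ (Fin n)) : ℂ) / 2 = (((n:ℝ)/2 : ℝ) : ℂ) := by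
    rw [finrank_euclideanSpace_fin]; push_cast; ring
  rw [h1, h2, ← Complex.ofReal_cpow (by positivity)]
  have h3 : (R^2) ^ ((n:ℝ)/2) = R^n := by
    rw [← Real.rpow_natCast R 2, ← Real.rpow_mul hR.le, ← Real.rpow_natCast R n]
    congr 1
    ring
  rw [h3]
  have h4 : (-(2 * (π:ℂ) * Complex.I))^2 * (‖v‖:ℂ)^2 / (4 * ((π * R⁻¹^2 : ℝ) : ℂ))
      = ((-(π * R^2) * ‖v‖^2 : ℝ) : ℂ) := by
    push_cast
    field_simp
    ring_nf
    rw [Complex.I_sq]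
    have hπc : (π:ℂ) ≠ 0 := by exact_mod_cast hπ
    field_simp
  rw [h4, ← Complex.ofReal_exp, ← Complex.ofReal_mul]

theorem muhat_continuous {n : ℕ} (μ : Measure (EuclideanSpace ℝ (Fin n)))
    [IsProbabilityMeasure μ] (μhat : EuclideanSpace ℝ (Fin n) → ℂ)
    (hform : ∀ ξ, μhat ξ = ∫ x, Complex.exp (-(2 * (π:ℂ) * Complex.I) * ((⟪ξ, x⟫ : ℝ):ℂ)) ∂μ) :
    Continuous μhat := by
  have h : μhat = fun ξ => ∫ x, Complex.exp (-(2 * (π:ℂ) * Complex.I) * ((⟪ξ, x⟫ : ℝ):ℂ)) ∂μ :=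
    funext hform
  rw [h]
  have hc : Continuous fun p : (EuclideanSpace ℝ (Fin n)) × (EuclideanSpace ℝ (Fin n)) =>
      Complex.exp (-(2 * (π:ℂ) * Complex.I) * ((⟪p.1, p.2⟫ : ℝ):ℂ)) :=
    Complex.continuous_exp.comp (continuous_const.mul
      (Complex.continuous_ofReal.comp continuous_inner))
  apply continuous_of_dominated
  · intro ξ
    exact (Complex.continuous_exp.comp (continuous_const.mul
      (Complex.continuous_ofReal.comp (Continuous.inner continuous_const
        continuous_id)))).aestronglyMeasurable
  · exact fun ξ => Filter.Eventually.of_forall fun x => le_of_eq (norm_kernel' _)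
  · exact integrable_const 1
  · refine Filter.Eventually.of_forall fun x => ?_
    exact Complex.continuous_exp.comp (continuous_const.mul
      (Complex.continuous_ofReal.comp (Continuous.inner continuous_id continuous_const)))

theorem muhat_bound {n : ℕ} (μ : Measure (EuclideanSpace ℝ (Fin n)))
    [IsProbabilityMeasure μ] (μhat : EuclideanSpace ℝ (Fin n) → ℂ)
    (hform : ∀ ξ, μhat ξ = ∫ x, Complex.exp (-(2 * (π:ℂ) * Complex.I) * ((⟪ξ, x⟫ : ℝ):ℂ)) ∂μ)
    (ξ : EuclideanSpace ℝ (Fin n)) : ‖μhat ξ‖ ≤ 1 := by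
  rw [hform]
  calc ‖∫ x, Complex.exp (-(2 * (π:ℂ) * Complex.I) * ((⟪ξ, x⟫ : ℝ):ℂ)) ∂μ‖
      ≤ ∫ x, ‖Complex.exp (-(2 * (π:ℂ) * Complex.I) * ((⟪ξ, x⟫ : ℝ):ℂ))‖ ∂μ :=
        norm_integral_le_integral_norm _
    _ = ∫ (_ : EuclideanSpace ℝ (Fin n)), (1:ℝ) ∂μ := by
        congr 1; funext x; exact norm_kernel' _
    _ = 1 := by simp

theorem l2loc {n : ℕ} (A α : ℝ) (hA : 0 ≤ A) (hαn : α ≤ n)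
    (μ : Measure (EuclideanSpace ℝ (Fin n))) [IsProbabilityMeasure μ]
    (hball : ∀ x r, 0 < r → μ (Metric.closedBall x r) ≤ ENNReal.ofReal (A * r ^ α))
    (μhat : EuclideanSpace ℝ (Fin n) → ℂ)
    (hform : ∀ ξ, μhat ξ = ∫ x, Complex.exp (-(2 * (π:ℂ) * Complex.I) * ((⟪ξ, x⟫ : ℝ):ℂ)) ∂μ)
    (R : ℝ) (hR : 1 ≤ R) :
    ∫⁻ ξ in Metric.closedBall (0 : EuclideanSpace ℝ (Fin n)) R, (‖μhat ξ‖₊ : ℝ≥0∞) ^ (2:ℝ)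
      ≤ ENNReal.ofReal (rexp π * (∑' k:ℕ, rexp (-π*k^2)*(k+1:ℝ)^n) * A * R ^ ((n:ℝ) - α)) := by
  have hR0 : (0:ℝ) < R := lt_of_lt_of_le one_pos hR
  set b : ℝ := π * R⁻¹^2 with hbdef
  have hb0 : 0 < b := mul_pos Real.pi_pos (pow_pos (inv_pos.mpr hR0) 2)
  set G : EuclideanSpace ℝ (Fin n) → ℝ := fun ξ => rexp (-b * ‖ξ‖^2) with hGdef
  have hG0 : ∀ ξ, 0 < G ξ := fun ξ => Real.exp_pos _
  have hG1 : ∀ ξ, G ξ ≤ 1 := fun ξ => Real.exp_le_one_iff.mpr (by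
    have : 0 ≤ b * ‖ξ‖^2 := mul_nonneg hb0.le (sq_nonneg _)
    linarith)
  have hGcont : Continuous G := by
    apply Real.continuous_exp.comp
    exact (continuous_const.mul ((continuous_norm).pow 2))
  have hμcont : Continuous μhat := muhat_continuous μ μhat hform
  have hμ1 : ∀ ξ, ‖μhat ξ‖ ≤ 1 := muhat_bound μ μhat hform
  set S : ℝ := ∑' k:ℕ, rexp (-π*k^2)*(k+1:ℝ)^n with hSdef
  have hS0 : 0 ≤ S := tsum_nonneg (fun k => by positivity)
  set T : ℝ := ∫ z : (EuclideanSpace ℝ (Fin n)) × (EuclideanSpace ℝ (Fin n)),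
      rexp (-(π * R^2) * ‖z.1 - z.2‖^2) ∂(μ.prod μ) with hTdef
  have hT0 : 0 ≤ T := integral_nonneg (fun z => (Real.exp_pos _).le)
  -- the key Plancherel-type identity
  have hKernConj : ∀ (ξ x : EuclideanSpace ℝ (Fin n)),
      (starRingEnd ℂ) (Complex.exp (-(2 * (π:ℂ) * Complex.I) * ((⟪ξ,x⟫:ℝ):ℂ)))
        = Complex.exp ((2 * (π:ℂ) * Complex.I) * ((⟪ξ,x⟫:ℝ):ℂ)) := by
    intro ξ x
    rw [← Complex.exp_conj]
    congr 1
    simp only [map_mul, map_neg, Complex.conj_I, Complex.conj_ofReal, map_ofNat]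
    ring
  set F : EuclideanSpace ℝ (Fin n) → (EuclideanSpace ℝ (Fin n) × EuclideanSpace ℝ (Fin n)) → ℂ :=
    fun ξ z => ((G ξ : ℝ):ℂ) * Complex.exp (-(2 * (π:ℂ) * Complex.I) * ((⟪ξ, z.1 - z.2⟫:ℝ):ℂ))
    with hFdef
  have hFnorm : ∀ ξ z, ‖F ξ z‖ = G ξ := by
    intro ξ z
    rw [hFdef]
    simp only [norm_mul, norm_kernel', mul_one, Complex.norm_real, Real.norm_eq_abs]
    exact _root_.abs_of_pos (hG0 ξ)
  have hFcont : Continuous (Function.uncurry F) := by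
    apply Continuous.mul
    · exact Complex.continuous_ofReal.comp (hGcont.comp continuous_fst)
    · apply Complex.continuous_exp.comp
      apply Continuous.mul continuous_const
      apply Complex.continuous_ofReal.comp
      exact Continuous.inner continuous_fst
        (((continuous_fst.comp continuous_snd)).sub ((continuous_snd.comp continuous_snd)))
  have hFint : Integrable (Function.uncurry F) (volume.prod (μ.prod μ)) := by
    rw [integrable_prod_iff hFcont.aestronglyMeasurable]
    constructor
    · refine Filter.Eventually.of_forall fun ξ => ?_
      apply (integrable_const (G ξ)).mono'
      · exact (hFcont.comp (Continuous.prodMk_right ξ)).aestronglyMeasurable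
      · exact Filter.Eventually.of_forall fun z => le_of_eq (hFnorm ξ z)
    · apply (integrable_gauss hb0).congr
      refine Filter.Eventually.of_forall fun ξ => ?_
      simp only [Function.uncurry_apply_pair]
      have : ∫ z, ‖F ξ z‖ ∂(μ.prod μ) = G ξ := by simp [hFnorm]
      rw [this]
  have hptA : ∀ ξ, ((‖μhat ξ‖^2 * G ξ : ℝ) : ℂ)
      = ((G ξ:ℝ):ℂ) * (μhat ξ * (starRingEnd ℂ) (μhat ξ)) := by
    intro ξ
    rw [Complex.mul_conj, Complex.normSq_eq_norm_sq]
    push_cast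
    ring
  have hkey : ∫ ξ, ‖μhat ξ‖^2 * G ξ = R^n * T := by
    have h1 : ((∫ ξ, ‖μhat ξ‖^2 * G ξ : ℝ) : ℂ)
        = ∫ ξ, ((G ξ:ℝ):ℂ) * (μhat ξ * (starRingEnd ℂ) (μhat ξ)) := by
      calc ((∫ ξ, ‖μhat ξ‖^2 * G ξ : ℝ) : ℂ)
          = ∫ ξ, ((‖μhat ξ‖^2 * G ξ : ℝ) : ℂ) := (integral_ofReal (𝕜 := ℂ)).symm
        _ = _ := integral_congr_ae (Filter.Eventually.of_forall hptA)
    have h2 : ∀ ξ, ((G ξ:ℝ):ℂ) * (μhat ξ * (starRingEnd ℂ) (μhat ξ))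
        = ∫ z, F ξ z ∂(μ.prod μ) := by
      intro ξ
      rw [hform ξ, ← integral_conj, ← integral_prod_mul, ← integral_const_mul]
      refine integral_congr_ae (Filter.Eventually.of_forall fun z => ?_)
      simp only [hFdef]
      rw [hKernConj, ← Complex.exp_add]
      congr 1
      rw [inner_sub_right]
      push_cast
      ring
    have h3 : (∫ ξ, ∫ z, F ξ z ∂(μ.prod μ)) = ∫ z, (∫ ξ, F ξ z) ∂(μ.prod μ) :=
      integral_integral_swap hFint
    have h4 : ∀ z : (EuclideanSpace ℝ (Fin n) × EuclideanSpace ℝ (Fin n)),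
        (∫ ξ, F ξ z) = ((R^n * rexp (-(π*R^2) * ‖z.1 - z.2‖^2) : ℝ):ℂ) := by
      intro z
      rw [← gauss_fourier R hR0 (z.1 - z.2)]
      refine integral_congr_ae (Filter.Eventually.of_forall fun ξ => ?_)
      simp only [hFdef, hGdef]
      rw [Complex.exp_add, real_inner_comm]
      congr 1
      rw [Complex.ofReal_exp]
      congr 1
      rw [hbdef]
      push_cast
      ring
    have h5 : (∫ z, ((R^n * rexp (-(π*R^2) * ‖z.1 - z.2‖^2) : ℝ):ℂ) ∂(μ.prod μ))
        = ((R^n * T : ℝ):ℂ) := by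
      calc ∫ z, ((R^n * rexp (-(π*R^2) * ‖z.1-z.2‖^2) : ℝ):ℂ) ∂(μ.prod μ)
          = ((∫ z, R^n * rexp (-(π*R^2) * ‖z.1-z.2‖^2) ∂(μ.prod μ) : ℝ):ℂ) :=
            integral_ofReal (𝕜 := ℂ)
        _ = ((R^n * T : ℝ):ℂ) := by rw [hTdef, ← integral_const_mul]
    have : ((∫ ξ, ‖μhat ξ‖^2 * G ξ : ℝ) : ℂ) = ((R^n * T : ℝ):ℂ) := by
      rw [h1, integral_congr_ae (Filter.Eventually.of_forall h2), h3,
        integral_congr_ae (Filter.Eventually.of_forall h4), h5]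
    exact_mod_cast this
  -- the measure bound
  have hTbound : T ≤ S * (A * R ^ (-α)) := by
    have hRα : (0:ℝ) < R ^ (-α) := Real.rpow_pos_of_pos hR0 _
    have hSAR : (0:ℝ) ≤ S * (A * R ^ (-α)) := mul_nonneg hS0 (mul_nonneg hA hRα.le)
    have hcontT : Continuous fun z : (EuclideanSpace ℝ (Fin n) × EuclideanSpace ℝ (Fin n)) =>
        rexp (-(π * R^2) * ‖z.1 - z.2‖^2) := by
      apply Real.continuous_exp.comp
      exact continuous_const.mul (((continuous_fst.sub continuous_snd).norm).pow 2)
    have hTint : Integrable (fun z : (EuclideanSpace ℝ (Fin n) × EuclideanSpace ℝ (Fin n)) =>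
        rexp (-(π * R^2) * ‖z.1-z.2‖^2)) (μ.prod μ) := by
      apply (integrable_const (1:ℝ)).mono' hcontT.aestronglyMeasurable
      refine Filter.Eventually.of_forall fun z => ?_
      rw [Real.norm_eq_abs, _root_.abs_of_pos (Real.exp_pos _)]
      apply Real.exp_le_one_iff.mpr
      have h := mul_nonneg (mul_nonneg Real.pi_pos.le (sq_nonneg R)) (sq_nonneg ‖z.1-z.2‖)
      rw [neg_mul]
      linarith
    have h0 : ENNReal.ofReal T
        = ∫⁻ z, ENNReal.ofReal (rexp (-(π * R^2) * ‖z.1-z.2‖^2)) ∂(μ.prod μ) := by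
      rw [hTdef]
      exact ofReal_integral_eq_lintegral_ofReal hTint
        (Filter.Eventually.of_forall fun z => (Real.exp_pos _).le)
    have h1 : (∫⁻ z, ENNReal.ofReal (rexp (-(π * R^2) * ‖z.1-z.2‖^2)) ∂(μ.prod μ))
        = ∫⁻ x, ∫⁻ y, ENNReal.ofReal (rexp (-(π * R^2) * ‖x-y‖^2)) ∂μ ∂μ :=
      lintegral_prod _ (hcontT.measurable.ennreal_ofReal.aemeasurable)
    have hinner : ∀ x : EuclideanSpace ℝ (Fin n),
        (∫⁻ y, ENNReal.ofReal (rexp (-(π * R^2) * ‖x-y‖^2)) ∂μ)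
          ≤ ENNReal.ofReal (S * (A * R ^ (-α))) := by
      intro x
      have hpt : ∀ y : EuclideanSpace ℝ (Fin n), ENNReal.ofReal (rexp (-(π * R^2) * ‖x-y‖^2))
          ≤ ∑' k:ℕ, (Metric.closedBall x (((k:ℝ)+1)/R)).indicator
              (fun _ => ENNReal.ofReal (rexp (-π * (k:ℝ)^2))) y := by
        intro y
        set d : ℝ := ‖x - y‖ with hd
        have hd0 : 0 ≤ d := norm_nonneg _
        set k₀ : ℕ := ⌊R * d⌋₊ with hk0
        have hmem : y ∈ Metric.closedBall x (((k₀:ℝ)+1)/R) := by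
          rw [Metric.mem_closedBall, dist_comm, dist_eq_norm, le_div_iff₀ hR0]
          have h := Nat.lt_floor_add_one (R * d)
          calc ‖x - y‖ * R = R * d := by rw [← hd]; ring
            _ ≤ (k₀:ℝ) + 1 := by rw [hk0]; exact_mod_cast h.le
        have hexp : rexp (-(π * R^2) * d^2) ≤ rexp (-π * (k₀:ℝ)^2) := by
          apply Real.exp_le_exp.mpr
          have h1 : (k₀:ℝ) ≤ R * d := Nat.floor_le (by positivity)
          have h2 : (k₀:ℝ)^2 ≤ (R*d)^2 := by nlinarith [(Nat.cast_nonneg k₀ : (0:ℝ) ≤ (k₀:ℝ))]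
          nlinarith [Real.pi_pos]
        calc ENNReal.ofReal (rexp (-(π * R^2) * d^2))
            ≤ ENNReal.ofReal (rexp (-π * (k₀:ℝ)^2)) := ENNReal.ofReal_le_ofReal hexp
          _ = (Metric.closedBall x (((k₀:ℝ)+1)/R)).indicator
              (fun _ => ENNReal.ofReal (rexp (-π * (k₀:ℝ)^2))) y := by
              rw [Set.indicator_of_mem hmem]
          _ ≤ ∑' k:ℕ, (Metric.closedBall x (((k:ℝ)+1)/R)).indicator
              (fun _ => ENNReal.ofReal (rexp (-π * (k:ℝ)^2))) y := ENNReal.le_tsum k₀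
      calc (∫⁻ y, ENNReal.ofReal (rexp (-(π * R^2) * ‖x-y‖^2)) ∂μ)
          ≤ ∫⁻ y, ∑' k:ℕ, (Metric.closedBall x (((k:ℝ)+1)/R)).indicator
              (fun _ => ENNReal.ofReal (rexp (-π * (k:ℝ)^2))) y ∂μ := lintegral_mono hpt
        _ = ∑' k:ℕ, ∫⁻ y, (Metric.closedBall x (((k:ℝ)+1)/R)).indicator
              (fun _ => ENNReal.ofReal (rexp (-π * (k:ℝ)^2))) y ∂μ :=
            lintegral_tsum (fun k =>
              ((measurable_const).indicator Metric.isClosed_closedBall.measurableSet).aemeasurable)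
        _ = ∑' k:ℕ, ENNReal.ofReal (rexp (-π * (k:ℝ)^2)) * μ (Metric.closedBall x (((k:ℝ)+1)/R)) := by
            congr 1
            funext k
            rw [lintegral_indicator Metric.isClosed_closedBall.measurableSet, setLIntegral_const]
        _ ≤ ∑' k:ℕ, ENNReal.ofReal (rexp (-π * (k:ℝ)^2) * ((k:ℝ)+1)^n * (A * R ^ (-α))) := by
            apply ENNReal.tsum_le_tsum
            intro k
            have hr : (0:ℝ) < ((k:ℝ)+1)/R := by positivity
            calc ENNReal.ofReal (rexp (-π * (k:ℝ)^2)) * μ (Metric.closedBall x (((k:ℝ)+1)/R))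
                ≤ ENNReal.ofReal (rexp (-π * (k:ℝ)^2)) * ENNReal.ofReal (A * (((k:ℝ)+1)/R) ^ α) :=
                  mul_le_mul_right (hball x _ hr) _
              _ = ENNReal.ofReal (rexp (-π * (k:ℝ)^2) * (A * (((k:ℝ)+1)/R) ^ α)) := by
                  rw [← ENNReal.ofReal_mul (Real.exp_pos _).le]
              _ ≤ ENNReal.ofReal (rexp (-π * (k:ℝ)^2) * ((k:ℝ)+1)^n * (A * R ^ (-α))) := by
                  apply ENNReal.ofReal_le_ofReal
                  have hkn : (((k:ℝ)+1)/R) ^ α ≤ ((k:ℝ)+1)^n * R ^ (-α) := by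
                    rw [Real.div_rpow (by positivity) hR0.le, Real.rpow_neg hR0.le, div_eq_mul_inv]
                    apply mul_le_mul_of_nonneg_right _ (by positivity)
                    calc ((k:ℝ)+1) ^ α ≤ ((k:ℝ)+1) ^ (n:ℝ) :=
                          Real.rpow_le_rpow_of_exponent_le
                            (le_add_of_nonneg_left (Nat.cast_nonneg k)) hαn
                      _ = ((k:ℝ)+1)^n := Real.rpow_natCast _ n
                  calc rexp (-π * (k:ℝ)^2) * (A * (((k:ℝ)+1)/R) ^ α)
                      ≤ rexp (-π * (k:ℝ)^2) * (A * (((k:ℝ)+1)^n * R ^ (-α))) := by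
                        apply mul_le_mul_of_nonneg_left _ (Real.exp_pos _).le
                        exact mul_le_mul_of_nonneg_left hkn hA
                    _ = rexp (-π * (k:ℝ)^2) * ((k:ℝ)+1)^n * (A * R ^ (-α)) := by ring
        _ = ENNReal.ofReal (∑' k:ℕ, rexp (-π * (k:ℝ)^2) * ((k:ℝ)+1)^n * (A * R ^ (-α))) := by
            rw [ENNReal.ofReal_tsum_of_nonneg (fun k => by positivity)
              ((mySummable n).mul_right _)]
        _ = ENNReal.ofReal (S * (A * R ^ (-α))) := by
            rw [tsum_mul_right, hSdef]
    have h2 : ENNReal.ofReal T ≤ ENNReal.ofReal (S * (A * R ^ (-α))) := by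
      rw [h0, h1]
      calc (∫⁻ x, ∫⁻ y, ENNReal.ofReal (rexp (-(π * R^2) * ‖x-y‖^2)) ∂μ ∂μ)
          ≤ ∫⁻ _, ENNReal.ofReal (S * (A * R ^ (-α))) ∂μ := lintegral_mono hinner
        _ = ENNReal.ofReal (S * (A * R ^ (-α))) := by simp
    exact (ENNReal.ofReal_le_ofReal_iff hSAR).mp h2
  -- integrability
  have hint : Integrable (fun ξ => ‖μhat ξ‖^2 * G ξ) := by
    apply (integrable_gauss hb0).mono'
    · exact ((hμcont.norm.pow 2).mul hGcont).aestronglyMeasurable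
    · refine Filter.Eventually.of_forall fun ξ => ?_
      rw [Real.norm_eq_abs, _root_.abs_of_nonneg (by positivity)]
      have h1 : ‖μhat ξ‖^2 ≤ 1 := by
        have := hμ1 ξ
        nlinarith [norm_nonneg (μhat ξ)]
      calc ‖μhat ξ‖^2 * G ξ ≤ 1 * G ξ := by
            exact mul_le_mul_of_nonneg_right h1 (hG0 ξ).le
        _ = G ξ := one_mul _
  calc ∫⁻ ξ in Metric.closedBall (0 : EuclideanSpace ℝ (Fin n)) R, (‖μhat ξ‖₊ : ℝ≥0∞) ^ (2:ℝ)
      ≤ ∫⁻ ξ in Metric.closedBall (0 : EuclideanSpace ℝ (Fin n)) R,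
          ENNReal.ofReal (rexp π * (‖μhat ξ‖^2 * G ξ)) := by
        apply setLIntegral_mono
        · exact (measurable_const.mul
            ((hμcont.norm.pow 2).mul hGcont).measurable).ennreal_ofReal
        · intro ξ hξ
          have hball' : ‖ξ‖ ≤ R := by
            simpa [Metric.mem_closedBall, dist_zero_right] using hξ
          have hGlb : rexp (-π) ≤ G ξ := by
            rw [hGdef]
            apply Real.exp_le_exp.mpr
            rw [neg_mul, neg_le_neg_iff]
            calc b * ‖ξ‖^2 ≤ b * R^2 := by
                  apply mul_le_mul_of_nonneg_left _ hb0.le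
                  exact pow_le_pow_left₀ (norm_nonneg _) hball' 2
              _ = π * (R⁻¹^2 * R^2) := by rw [hbdef]; ring
              _ = π := by
                  rw [← mul_pow, inv_mul_cancel₀ (ne_of_gt hR0)]
                  norm_num
          have : ((‖μhat ξ‖₊ : ℝ≥0∞)) ^ (2:ℝ) = ENNReal.ofReal (‖μhat ξ‖^2) := by
            rw [← enorm_eq_nnnorm, ← ofReal_norm, ENNReal.ofReal_rpow_of_nonneg (norm_nonneg _)
              (by norm_num : (0:ℝ) ≤ 2), Real.rpow_two]
          rw [this]
          apply ENNReal.ofReal_le_ofReal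
          calc ‖μhat ξ‖^2 = ‖μhat ξ‖^2 * 1 := (mul_one _).symm
            _ ≤ ‖μhat ξ‖^2 * (rexp π * G ξ) := by
                apply mul_le_mul_of_nonneg_left _ (sq_nonneg _)
                calc (1:ℝ) = rexp π * rexp (-π) := by
                      rw [← Real.exp_add]; simp
                  _ ≤ rexp π * G ξ := mul_le_mul_of_nonneg_left hGlb (Real.exp_pos _).le
            _ = rexp π * (‖μhat ξ‖^2 * G ξ) := by ring
    _ ≤ ∫⁻ ξ, ENNReal.ofReal (rexp π * (‖μhat ξ‖^2 * G ξ)) :=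
        setLIntegral_le_lintegral _ _
    _ = ENNReal.ofReal (∫ ξ, rexp π * (‖μhat ξ‖^2 * G ξ)) := by
        rw [ofReal_integral_eq_lintegral_ofReal (hint.const_mul _)
          (Filter.Eventually.of_forall fun ξ => by positivity)]
    _ = ENNReal.ofReal (rexp π * (R^n * T)) := by rw [integral_const_mul, hkey]
    _ ≤ ENNReal.ofReal (rexp π * S * A * R ^ ((n:ℝ) - α)) := by
        apply ENNReal.ofReal_le_ofReal
        have hRn : (R:ℝ)^n * R ^ (-α) = R ^ ((n:ℝ) - α) := by
          rw [← Real.rpow_natCast R n, ← Real.rpow_add hR0, sub_eq_add_neg]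
        calc rexp π * (R^n * T) ≤ rexp π * (R^n * (S * (A * R ^ (-α)))) := by
              apply mul_le_mul_of_nonneg_left _ (Real.exp_pos _).le
              exact mul_le_mul_of_nonneg_left hTbound (by positivity)
          _ = rexp π * S * A * (R^n * R ^ (-α)) := by ring
          _ = rexp π * S * A * R ^ ((n:ℝ) - α) := by rw [hRn]

theorem sum_eq_inner {n : ℕ} (ξ x : EuclideanSpace ℝ (Fin n)) :
    (∑ i, (ξ i : ℂ) * (x i : ℂ)) = ((⟪ξ, x⟫ : ℝ) : ℂ) := by
  simp [PiLp.inner_apply, RCLike.inner_apply, conj_trivial]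
  exact Finset.sum_congr rfl fun i _ => mul_comm _ _

set_option maxHeartbeats 2000000 in
/-- Uniform `L^{2+δ}` moment bound for fractal measures via restriction: let `δ ∈ (0,1)`,
`β₀ ∈ (0,n)`, and `μ` a probability measure on `ℝⁿ` with `μ(B(x,r)) ≤ A rᵅ` and
`|μ̂(ξ)| ≤ B(1+|ξ|)^{−β/2}`.  Set `p₀ = 2 + 4(n−α)/β`.  If the Bak–Seeger restriction
estimate `‖f̂‖_{L²(dμ)} ≤ C_R max(A,B)^{p₀/(2p)} ‖f‖_{L^{p'}}` holds for all `p ≥ p₀` and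
Schwartz `f`, then uniformly for `n − δβ₀/4 ≤ α < n` and `β₀ ≤ β < n` one has
`‖μ̂‖_{L^{2+δ}(ℝⁿ)} ≲_{β₀,n,A} B^{1/2}`. -/
theorem uniform_moment_bound_via_restriction (n : ℕ) (hn : 0 < n)
    (δ β₀ A CR : ℝ) (hδ0 : 0 < δ) (hδ1 : δ < 1) (hβ₀0 : 0 < β₀) (hβ₀n : β₀ < n)
    (hA : 1 ≤ A) (hCR : 0 < CR) :
    ∃ C : ℝ, 0 < C ∧
    ∀ (α β B : ℝ) (μ : Measure (EuclideanSpace ℝ (Fin n))), IsProbabilityMeasure μ →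
      (n : ℝ) - δ * β₀ / 4 ≤ α → α < n → β₀ ≤ β → β < n → 0 < B →
      (∀ (x : EuclideanSpace ℝ (Fin n)) (r : ℝ), 0 < r →
        μ (Metric.closedBall x r) ≤ ENNReal.ofReal (A * r ^ α)) →
      ∀ μhat : EuclideanSpace ℝ (Fin n) → ℂ,
        (∀ ξ, μhat ξ = ∫ x, Complex.exp
            (-(2 * (π : ℂ) * Complex.I) * ∑ i, (ξ i : ℂ) * (x i : ℂ)) ∂μ) →
        (∀ ξ, ‖μhat ξ‖ ≤ B * (1 + ‖ξ‖) ^ (-(β / 2))) →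
      -- the restriction estimate, with `p₀ = 2 + 4(n−α)/β`
      (∀ p : ℝ, 2 + 4 * ((n : ℝ) - α) / β ≤ p →
        ∀ f : SchwartzMap (EuclideanSpace ℝ (Fin n)) ℂ,
          (∫ ξ, ‖∫ x, f x * Complex.exp
              (-(2 * (π : ℂ) * Complex.I) * ∑ i, (ξ i : ℂ) * (x i : ℂ))‖ ^ 2 ∂μ) ≤
            (CR * max A B ^ ((2 + 4 * ((n : ℝ) - α) / β) / (2 * p))) ^ 2 *
              ((eLpNorm (fun x => f x) (ENNReal.ofReal (p / (p - 1))) volume).toReal) ^ 2) →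
      eLpNorm μhat (ENNReal.ofReal (2 + δ)) volume ≤
        ENNReal.ofReal (C * Real.sqrt B) := by
  classical
  set S : ℝ := ∑' k:ℕ, rexp (-π*(k:ℝ)^2)*((k:ℝ)+1)^n with hSdef
  have hS0 : 0 ≤ S := tsum_nonneg fun k => by positivity
  set ε : ℝ := δ * β₀ / 4 with hε
  have hε0 : 0 < ε := by positivity
  set r : ℝ := (2:ℝ) ^ (-ε) with hrdef
  have hr0 : 0 < r := Real.rpow_pos_of_pos two_pos _
  have hr1 : r < 1 := Real.rpow_lt_one_of_one_lt_of_neg one_lt_two (by linarith)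
  set K : ℝ := rexp π * S * A with hK
  have hK0 : 0 ≤ K := by
    apply mul_nonneg (mul_nonneg (Real.exp_pos _).le hS0)
    linarith
  set C : ℝ := max 1 (K * 2^n / (1 - r)) with hC
  have hC1 : (1:ℝ) ≤ C := le_max_left _ _
  have hC0 : (0:ℝ) < C := lt_of_lt_of_le one_pos hC1
  refine ⟨C, hC0, ?_⟩
  intro α β B μ hprob hα1 hα2 hβ1 hβ2 hB hball μhat hμform hdecay _hrestr
  have hn1 : (1:ℝ) ≤ n := by exact_mod_cast hn
  have hα0 : 0 < α := by nlinarith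
  have hαn' : α ≤ n := hα2.le
  -- inner product form of the Fourier transform
  have hform : ∀ ξ, μhat ξ
      = ∫ x, Complex.exp (-(2 * (π:ℂ) * Complex.I) * ((⟪ξ, x⟫ : ℝ):ℂ)) ∂μ := by
    intro ξ
    rw [hμform ξ]
    refine integral_congr_ae (Filter.Eventually.of_forall fun x => ?_)
    simp only [sum_eq_inner]
  -- B ≥ 1
  have hμ0 : μhat 0 = 1 := by
    rw [hform 0]
    have : ∀ x : EuclideanSpace ℝ (Fin n),
        Complex.exp (-(2 * (π:ℂ) * Complex.I) * ((⟪(0:EuclideanSpace ℝ (Fin n)), x⟫ : ℝ):ℂ))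
          = 1 := by
      intro x
      simp
    rw [integral_congr_ae (Filter.Eventually.of_forall this)]
    simp
  have hB1 : (1:ℝ) ≤ B := by
    have h := hdecay 0
    rw [hμ0] at h
    simpa using h
  have hB0 : (0:ℝ) < B := hB
  have hμcont : Continuous μhat := muhat_continuous μ μhat hform
  have h2δ : (0:ℝ) < 2 + δ := by linarith
  have hβpos : (0:ℝ) < β := lt_of_lt_of_le hβ₀0 hβ1
  set e : ℝ := (-(β/2))*δ with he
  have heneg : e ≤ 0 := by rw [he]; nlinarith
  have he2ε : e ≤ -2*ε := by rw [he, hε]; nlinarith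
  have hna : (n:ℝ) - α ≤ ε := by rw [hε]; linarith
  have hεn : ε ≤ n := by rw [hε]; nlinarith
  -- annuli
  set Aset : ℕ → Set (EuclideanSpace ℝ (Fin n)) := fun j =>
    {ξ | (2:ℝ)^(j:ℝ) ≤ 1 + ‖ξ‖} ∩ {ξ | 1 + ‖ξ‖ < (2:ℝ)^((j:ℝ)+1)} with hAset
  have hAmeas : ∀ j, MeasurableSet (Aset j) := by
    intro j
    apply MeasurableSet.inter
    · exact measurableSet_le measurable_const (measurable_const.add measurable_norm)
    · exact measurableSet_lt (measurable_const.add measurable_norm) measurable_const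
  have hcover : (⋃ j, Aset j) = Set.univ := by
    ext ξ
    simp only [Set.mem_iUnion, Set.mem_univ, iff_true, hAset, Set.mem_inter_iff,
      Set.mem_setOf_eq]
    have ht : (1:ℝ) ≤ 1 + ‖ξ‖ := by linarith [norm_nonneg ξ]
    have ht0 : (0:ℝ) < 1 + ‖ξ‖ := by linarith
    refine ⟨⌊Real.logb 2 (1+‖ξ‖)⌋₊, ?_, ?_⟩
    · calc (2:ℝ)^((⌊Real.logb 2 (1+‖ξ‖)⌋₊:ℕ):ℝ)
          ≤ (2:ℝ)^(Real.logb 2 (1+‖ξ‖)) :=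
            Real.rpow_le_rpow_of_exponent_le one_le_two
              (Nat.floor_le (Real.logb_nonneg one_lt_two ht))
        _ = 1 + ‖ξ‖ := Real.rpow_logb two_pos (by norm_num) ht0
    · calc 1 + ‖ξ‖ = (2:ℝ)^(Real.logb 2 (1+‖ξ‖)) :=
            (Real.rpow_logb two_pos (by norm_num) ht0).symm
        _ < (2:ℝ)^((⌊Real.logb 2 (1+‖ξ‖)⌋₊:ℝ)+1) := by
            apply Real.rpow_lt_rpow_of_exponent_lt one_lt_two
            have := Nat.lt_floor_add_one (Real.logb 2 (1+‖ξ‖))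
            push_cast
            linarith
  have hdisjkey : ∀ i j : ℕ, i < j → Disjoint (Aset i) (Aset j) := by
    intro i j hij
    rw [Set.disjoint_left]
    rintro ξ ⟨hi1, hi2⟩ ⟨hj1, hj2⟩
    simp only [Set.mem_setOf_eq] at hi1 hi2 hj1 hj2
    have h21 : (2:ℝ)^((i:ℝ)+1) ≤ (2:ℝ)^(j:ℝ) := by
      apply Real.rpow_le_rpow_of_exponent_le one_le_two
      have : (i:ℝ) + 1 ≤ j := by exact_mod_cast hij
      exact this
    linarith
  have hdisj : Pairwise (Function.onFun Disjoint Aset) := by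
    intro i j hij
    rcases lt_or_gt_of_ne hij with h|h
    · exact hdisjkey _ _ h
    · exact (hdisjkey _ _ h).symm
  -- per-annulus bound
  have hannulus : ∀ j : ℕ,
      (∫⁻ ξ in Aset j, ENNReal.ofReal ((1+‖ξ‖) ^ e) * (‖μhat ξ‖₊ : ℝ≥0∞)^(2:ℝ))
        ≤ ENNReal.ofReal (K * 2^n * r^j) := by
    intro j
    have hRj1 : (1:ℝ) ≤ (2:ℝ)^((j:ℝ)+1) := by
      rw [show (1:ℝ) = (2:ℝ)^(0:ℝ) by rw [Real.rpow_zero]]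
      exact Real.rpow_le_rpow_of_exponent_le one_le_two (by positivity)
    have hsub : Aset j ⊆ Metric.closedBall 0 ((2:ℝ)^((j:ℝ)+1)) := by
      rintro ξ ⟨h1, h2⟩
      simp only [Set.mem_setOf_eq] at h1 h2
      rw [Metric.mem_closedBall, dist_zero_right]
      linarith
    have h2j : (0:ℝ) < (2:ℝ)^(j:ℝ) := Real.rpow_pos_of_pos two_pos _
    have hcore : (2:ℝ)^((j:ℝ)*e) * (2:ℝ)^(((j:ℝ)+1)*((n:ℝ)-α))
        ≤ (2:ℝ)^((n:ℝ) + (-ε)*(j:ℝ)) := by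
      rw [← Real.rpow_add two_pos]
      apply Real.rpow_le_rpow_of_exponent_le one_le_two
      have hj0 : (0:ℝ) ≤ (j:ℝ) := Nat.cast_nonneg j
      nlinarith [mul_le_mul_of_nonneg_left hna (by positivity : (0:ℝ) ≤ (j:ℝ)+1),
        mul_le_mul_of_nonneg_left he2ε hj0]
    calc (∫⁻ ξ in Aset j, ENNReal.ofReal ((1+‖ξ‖) ^ e) * (‖μhat ξ‖₊ : ℝ≥0∞)^(2:ℝ))
        ≤ ∫⁻ ξ in Aset j, ENNReal.ofReal (((2:ℝ)^(j:ℝ)) ^ e) * (‖μhat ξ‖₊ : ℝ≥0∞)^(2:ℝ) := by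
          apply setLIntegral_mono' (hAmeas j)
          rintro ξ ⟨h1, _⟩
          simp only [Set.mem_setOf_eq] at h1
          apply mul_le_mul_left
          exact ENNReal.ofReal_le_ofReal (Real.rpow_le_rpow_of_nonpos h2j h1 heneg)
      _ = ENNReal.ofReal (((2:ℝ)^(j:ℝ)) ^ e) * ∫⁻ ξ in Aset j, (‖μhat ξ‖₊ : ℝ≥0∞)^(2:ℝ) :=
          lintegral_const_mul' _ _ ENNReal.ofReal_ne_top
      _ ≤ ENNReal.ofReal (((2:ℝ)^(j:ℝ)) ^ e)
            * ∫⁻ ξ in Metric.closedBall 0 ((2:ℝ)^((j:ℝ)+1)), (‖μhat ξ‖₊ : ℝ≥0∞)^(2:ℝ) :=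
          mul_le_mul_right (lintegral_mono_set hsub) _
      _ ≤ ENNReal.ofReal (((2:ℝ)^(j:ℝ)) ^ e)
            * ENNReal.ofReal (rexp π * S * A * ((2:ℝ)^((j:ℝ)+1)) ^ ((n:ℝ) - α)) := by
          apply mul_le_mul_right
          exact l2loc A α (by linarith) hαn' μ hball μhat hform _ hRj1
      _ = ENNReal.ofReal (((2:ℝ)^(j:ℝ)) ^ e
            * (rexp π * S * A * ((2:ℝ)^((j:ℝ)+1)) ^ ((n:ℝ) - α))) := by
          rw [← ENNReal.ofReal_mul (by positivity)]
      _ ≤ ENNReal.ofReal (K * 2^n * r^j) := by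
          apply ENNReal.ofReal_le_ofReal
          have hrj : r^j = (2:ℝ)^((-ε)*(j:ℝ)) := by
            rw [← Real.rpow_natCast r j, hrdef, ← Real.rpow_mul (by norm_num : (0:ℝ) ≤ 2)]
          have h2n : (2:ℝ)^n = (2:ℝ)^((n:ℝ):ℝ) := (Real.rpow_natCast 2 n).symm
          have hpe : ((2:ℝ)^(j:ℝ)) ^ e = (2:ℝ)^((j:ℝ)*e) :=
            (Real.rpow_mul (by norm_num : (0:ℝ) ≤ 2) _ _).symm
          have hpna : ((2:ℝ)^((j:ℝ)+1)) ^ ((n:ℝ)-α) = (2:ℝ)^(((j:ℝ)+1)*((n:ℝ)-α)) :=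
            (Real.rpow_mul (by norm_num : (0:ℝ) ≤ 2) _ _).symm
          calc ((2:ℝ)^(j:ℝ)) ^ e * (rexp π * S * A * ((2:ℝ)^((j:ℝ)+1)) ^ ((n:ℝ) - α))
              = K * ((2:ℝ)^((j:ℝ)*e) * (2:ℝ)^(((j:ℝ)+1)*((n:ℝ)-α))) := by
                rw [hpe, hpna, hK]; ring
            _ ≤ K * (2:ℝ)^((n:ℝ) + (-ε)*(j:ℝ)) := mul_le_mul_of_nonneg_left hcore hK0
            _ = K * 2^n * r^j := by
                rw [hrj, h2n, Real.rpow_add two_pos]; ring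
  -- sum the annuli
  set I2 : ℝ≥0∞ := ∫⁻ ξ, ENNReal.ofReal ((1+‖ξ‖) ^ e) * (‖μhat ξ‖₊ : ℝ≥0∞)^(2:ℝ) with hI2
  have hI2bound : I2 ≤ ENNReal.ofReal (K * 2^n / (1 - r)) := by
    have hKn0 : (0:ℝ) ≤ K * 2^n := mul_nonneg hK0 (by positivity)
    have hgeo : (1 - ENNReal.ofReal r)⁻¹ = ENNReal.ofReal ((1-r)⁻¹) := by
      rw [← ENNReal.ofReal_one, ← ENNReal.ofReal_sub _ hr0.le,
        ENNReal.ofReal_inv_of_pos (by linarith)]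
    calc I2 = ∫⁻ ξ in Set.univ, ENNReal.ofReal ((1+‖ξ‖) ^ e) * (‖μhat ξ‖₊:ℝ≥0∞)^(2:ℝ) := by
          rw [setLIntegral_univ]
      _ = ∫⁻ ξ in ⋃ j, Aset j, ENNReal.ofReal ((1+‖ξ‖) ^ e) * (‖μhat ξ‖₊:ℝ≥0∞)^(2:ℝ) := by
          rw [hcover]
      _ = ∑' j, ∫⁻ ξ in Aset j, ENNReal.ofReal ((1+‖ξ‖) ^ e) * (‖μhat ξ‖₊:ℝ≥0∞)^(2:ℝ) :=
          lintegral_iUnion hAmeas hdisj _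
      _ ≤ ∑' j : ℕ, ENNReal.ofReal (K * 2^n * r^j) := ENNReal.tsum_le_tsum hannulus
      _ = ∑' j : ℕ, ENNReal.ofReal (K * 2^n) * (ENNReal.ofReal r)^j := by
          congr 1
          funext j
          rw [ENNReal.ofReal_mul hKn0, ENNReal.ofReal_pow hr0.le]
      _ = ENNReal.ofReal (K * 2^n) * ∑' j : ℕ, (ENNReal.ofReal r)^j := ENNReal.tsum_mul_left
      _ = ENNReal.ofReal (K * 2^n) * (1 - ENNReal.ofReal r)⁻¹ := by
          rw [ENNReal.tsum_geometric]
      _ = ENNReal.ofReal (K * 2^n / (1 - r)) := by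
          rw [hgeo, ← ENNReal.ofReal_mul hKn0, div_eq_mul_inv]
  -- total integral bound
  have hItot : (∫⁻ ξ, (‖μhat ξ‖₊ : ℝ≥0∞) ^ ((2:ℝ)+δ)) ≤ ENNReal.ofReal (C * B^δ) := by
    have hBδ0 : (0:ℝ) ≤ B^δ := Real.rpow_nonneg hB0.le δ
    have hpt : ∀ ξ, (‖μhat ξ‖₊:ℝ≥0∞) ^ ((2:ℝ)+δ)
        ≤ ENNReal.ofReal (B^δ) * (ENNReal.ofReal ((1+‖ξ‖)^e) * (‖μhat ξ‖₊:ℝ≥0∞)^(2:ℝ)) := by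
      intro ξ
      have hsplit : (‖μhat ξ‖₊:ℝ≥0∞) ^ ((2:ℝ)+δ)
          = (‖μhat ξ‖₊:ℝ≥0∞) ^ (δ:ℝ) * (‖μhat ξ‖₊:ℝ≥0∞) ^ (2:ℝ) := by
        rw [← ENNReal.rpow_add_of_nonneg δ 2 hδ0.le (by norm_num : (0:ℝ) ≤ 2)]
        congr 1
        ring
      rw [hsplit, ← mul_assoc]
      apply mul_le_mul_left
      rw [← ENNReal.ofReal_mul hBδ0]
      rw [← enorm_eq_nnnorm, ← ofReal_norm, ENNReal.ofReal_rpow_of_nonneg (norm_nonneg _) hδ0.le]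
      apply ENNReal.ofReal_le_ofReal
      calc ‖μhat ξ‖ ^ δ ≤ (B * (1+‖ξ‖) ^ (-(β/2))) ^ δ :=
            Real.rpow_le_rpow (norm_nonneg _) (hdecay ξ) hδ0.le
        _ = B^δ * (1+‖ξ‖) ^ e := by
            rw [Real.mul_rpow hB0.le (Real.rpow_nonneg (by positivity) _),
              ← Real.rpow_mul (by positivity), he]
    calc (∫⁻ ξ, (‖μhat ξ‖₊ : ℝ≥0∞) ^ ((2:ℝ)+δ))
        ≤ ∫⁻ ξ, ENNReal.ofReal (B^δ) * (ENNReal.ofReal ((1+‖ξ‖)^e) * (‖μhat ξ‖₊:ℝ≥0∞)^(2:ℝ)) :=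
          lintegral_mono hpt
      _ = ENNReal.ofReal (B^δ) * I2 := by
          rw [lintegral_const_mul' _ _ ENNReal.ofReal_ne_top, hI2]
      _ ≤ ENNReal.ofReal (B^δ) * ENNReal.ofReal (K * 2^n / (1-r)) :=
          mul_le_mul_right hI2bound _
      _ ≤ ENNReal.ofReal (B^δ) * ENNReal.ofReal C := by
          apply mul_le_mul_right
          exact ENNReal.ofReal_le_ofReal (le_max_right _ _)
      _ = ENNReal.ofReal (C * B^δ) := by
          rw [← ENNReal.ofReal_mul hBδ0, mul_comm]
  -- conclude
  have hne0 : ENNReal.ofReal (2+δ) ≠ 0 := (ENNReal.ofReal_pos.mpr h2δ).ne'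
  rw [eLpNorm_eq_lintegral_rpow_enorm_toReal hne0 ENNReal.ofReal_ne_top,
    ENNReal.toReal_ofReal h2δ.le]
  calc (∫⁻ ξ, (‖μhat ξ‖₊ : ℝ≥0∞) ^ (2+δ)) ^ (1/(2+δ))
      ≤ (ENNReal.ofReal (C * B^δ)) ^ (1/(2+δ)) :=
        ENNReal.rpow_le_rpow hItot (by positivity)
    _ = ENNReal.ofReal ((C * B^δ) ^ (1/(2+δ))) :=
        ENNReal.ofReal_rpow_of_nonneg (by positivity) (by positivity)
    _ ≤ ENNReal.ofReal (C * Real.sqrt B) := by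
        apply ENNReal.ofReal_le_ofReal
        rw [Real.mul_rpow hC0.le (Real.rpow_nonneg hB0.le _)]
        have h1 : C ^ ((1:ℝ)/(2+δ)) ≤ C := by
          calc C ^ ((1:ℝ)/(2+δ)) ≤ C ^ (1:ℝ) :=
              Real.rpow_le_rpow_of_exponent_le hC1 (by rw [div_le_one h2δ]; linarith)
            _ = C := Real.rpow_one C
        have h2 : (B^δ) ^ ((1:ℝ)/(2+δ)) ≤ Real.sqrt B := by
          rw [← Real.rpow_mul hB0.le, Real.sqrt_eq_rpow]
          apply Real.rpow_le_rpow_of_exponent_le hB1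
          rw [mul_one_div, div_le_div_iff₀ h2δ two_pos]
          linarith
        exact mul_le_mul h1 h2 (by positivity) hC0.le
end
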